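/- arXiv:1604.01866 — 6 statements merged into one kernel-verified Lean document; each statement's English description precedes it below -/
import Mathlib

section
/- Let T : ℝⁿ → Set ℝⁿ be a maximal monotone operator and β > 0. Then the resolvent (I + βT)^{-1} is everywhere defined and single-valued: for every x ∈ ℝⁿ there exists exactly one z ∈ dom(T) such that x ∈ z + βT(z) (i.e., (x − z)/β ∈ T(z)). Moreover, the resulting map J_β : ℝⁿ → ℝⁿ is monotone: ⟨J_β(x) − J_β(y), x − y⟩ ≥ 0 for all x, y ∈ ℝⁿ. -/
open scoped RealInnerProductSpace

open Finset Topology Filter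

variable {F : Type*} [NormedAddCommGroup F] [InnerProductSpace ℝ F]

lemma sum_weight_norm_sub_sq (B : Finset F) (w : F → ℝ) (hw1 : ∑ y ∈ B, w y = 1)
    (c : F) (φ : F → F) :
    ∑ y ∈ B, w y * ‖c - φ y‖ ^ 2
      = ‖c‖ ^ 2 - 2 * ⟪c, ∑ y ∈ B, w y • φ y⟫ + ∑ y ∈ B, w y * ‖φ y‖ ^ 2 := by
  have : ∀ y ∈ B, w y * ‖c - φ y‖ ^ 2
      = w y * ‖c‖ ^ 2 - 2 * (w y * ⟪c, φ y⟫) + w y * ‖φ y‖ ^ 2 := by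
    intro y _; rw [norm_sub_sq_real]; ring
  rw [Finset.sum_congr rfl this, Finset.sum_add_distrib, Finset.sum_sub_distrib,
    ← Finset.sum_mul, hw1, ← Finset.mul_sum, inner_sum]
  simp only [real_inner_smul_right]
  ring

lemma double_sum_norm_sub_sq (B : Finset F) (w : F → ℝ) (hw1 : ∑ y ∈ B, w y = 1)
    (φ : F → F) :
    ∑ y ∈ B, ∑ z ∈ B, w y * w z * ‖φ y - φ z‖ ^ 2
      = 2 * (∑ y ∈ B, w y * ‖φ y‖ ^ 2) - 2 * ‖∑ y ∈ B, w y • φ y‖ ^ 2 := by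
  have key : ∀ y ∈ B, ∑ z ∈ B, w y * w z * ‖φ y - φ z‖ ^ 2
      = w y * ‖φ y‖ ^ 2 - 2 * (w y * ⟪φ y, ∑ z ∈ B, w z • φ z⟫)
        + w y * ∑ z ∈ B, w z * ‖φ z‖ ^ 2 := by
    intro y _
    have : ∀ z ∈ B, w y * w z * ‖φ y - φ z‖ ^ 2
        = w y * (w z * ‖φ y‖ ^ 2) - 2 * (w y * (w z * ⟪φ y, φ z⟫))
          + w y * (w z * ‖φ z‖ ^ 2) := by
      intro z _; rw [norm_sub_sq_real]; ring
    rw [Finset.sum_congr rfl this, Finset.sum_add_distrib, Finset.sum_sub_distrib,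
      inner_sum]
    simp only [real_inner_smul_right, ← Finset.mul_sum, ← Finset.sum_mul, hw1]
    ring
  rw [Finset.sum_congr rfl key, Finset.sum_add_distrib, Finset.sum_sub_distrib,
    ← Finset.sum_mul, hw1]
  have hS : ∑ x ∈ B, w x * ⟪φ x, ∑ z ∈ B, w z • φ z⟫ = ‖∑ z ∈ B, w z • φ z‖ ^ 2 := by
    rw [← real_inner_self_eq_norm_sq, sum_inner]
    simp only [real_inner_smul_left]
  have h2 : ∑ x ∈ B, 2 * (w x * ⟪φ x, ∑ z ∈ B, w z • φ z⟫)
      = 2 * ‖∑ z ∈ B, w z • φ z‖ ^ 2 := by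
    rw [← Finset.mul_sum, hS]
  rw [h2]
  ring

lemma finite_kirszbraun {n : ℕ} {ι : Type*} (s : Finset ι)
    (p h : ι → EuclideanSpace ℝ (Fin n)) (x : EuclideanSpace ℝ (Fin n))
    (hlip : ∀ i ∈ s, ∀ j ∈ s, ‖h i - h j‖ ≤ ‖p i - p j‖) :
    ∃ w : EuclideanSpace ℝ (Fin n), ∀ i ∈ s, ‖w - h i‖ ≤ ‖x - p i‖ := by
  classical
  rcases s.eq_empty_or_nonempty with rfl | hs
  · exact ⟨x, by simp⟩
  set g : ι → EuclideanSpace ℝ (Fin n) → ℝ :=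
    fun i w => ‖w - h i‖ ^ 2 - ‖x - p i‖ ^ 2 with hg
  set f : EuclideanSpace ℝ (Fin n) → ℝ := fun w => s.sup' hs (fun i => g i w) with hf
  have hgc : ∀ i, Continuous (g i) := fun i => by
    have h1 : Continuous fun w : EuclideanSpace ℝ (Fin n) => ‖w - h i‖ :=
      (continuous_id.sub continuous_const).norm
    exact (h1.pow 2).sub continuous_const
  have hfc : Continuous f := Continuous.finset_sup'_apply hs (fun i _ => hgc i)
  set C := convexHull ℝ (↑(s.image h) : Set (EuclideanSpace ℝ (Fin n))) with hC
  have hCcompact : IsCompact C := (s.image h).finite_toSet.isCompact_convexHull ℝ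
  have hCconv : Convex ℝ C := convex_convexHull _ _
  have hCne : C.Nonempty := by
    obtain ⟨i, hi⟩ := hs
    exact ⟨h i, subset_convexHull ℝ _ (Finset.mem_coe.2 (Finset.mem_image_of_mem h hi))⟩
  obtain ⟨w₀, hw₀C, hmin⟩ := hCcompact.exists_isMinOn hCne hfc.continuousOn
  set m := f w₀ with hm
  set A := s.filter (fun i => g i w₀ = m) with hA
  have hAs : A ⊆ s := Finset.filter_subset _ _
  have hAne : A.Nonempty := by
    obtain ⟨i, hi, hieq⟩ := s.exists_mem_eq_sup' hs (fun i => g i w₀)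
    exact ⟨i, Finset.mem_filter.2 ⟨hi, hieq.symm⟩⟩
  set K := convexHull ℝ (↑(A.image h) : Set (EuclideanSpace ℝ (Fin n))) with hK
  have hKC : K ⊆ C := convexHull_mono (Finset.coe_subset.2 (Finset.image_subset_image hAs))
  have hKcompact : IsCompact K := (A.image h).finite_toSet.isCompact_convexHull ℝ
  have hKconv : Convex ℝ K := convex_convexHull _ _
  have hKne : K.Nonempty := by
    obtain ⟨i, hi⟩ := hAne
    exact ⟨h i, subset_convexHull ℝ _ (Finset.mem_coe.2 (Finset.mem_image_of_mem h hi))⟩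
  obtain ⟨P, hPK, hPdist⟩ :=
    exists_norm_eq_iInf_of_complete_convex hKne hKcompact.isComplete hKconv w₀
  have hproj : ∀ z ∈ K, ⟪w₀ - P, z - P⟫ ≤ 0 :=
    (norm_eq_iInf_iff_real_inner_le_zero hKconv hPK).1 hPdist
  -- Step A : w₀ ∈ K
  have hw₀K : w₀ ∈ K := by
    by_contra hw₀K
    have hδ : P - w₀ ≠ 0 := by
      intro h0
      exact hw₀K (by rwa [← sub_eq_zero.1 h0])
    set δ := P - w₀ with hδdef
    have hδpos : 0 < ‖δ‖ ^ 2 := by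
      have := norm_pos_iff.2 hδ
      positivity
    have hinner : ∀ i ∈ A, ⟪w₀ - h i, δ⟫ ≤ -‖δ‖ ^ 2 := by
      intro i hi
      have hhK : h i ∈ K :=
        subset_convexHull ℝ _ (Finset.mem_coe.2 (Finset.mem_image_of_mem h hi))
      have hpr := hproj (h i) hhK
      have expand : ⟪w₀ - h i, δ⟫ = -‖δ‖ ^ 2 + ⟪w₀ - P, h i - P⟫ := by
        have hsplit : w₀ - h i = (w₀ - P) + (P - h i) := by abel
        rw [hsplit, inner_add_left]
        have h1 : ⟪w₀ - P, δ⟫ = -‖δ‖ ^ 2 := by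
          have hwp : w₀ - P = -δ := by rw [hδdef]; abel
          rw [hwp, inner_neg_left, real_inner_self_eq_norm_sq]
        have h2 : ⟪P - h i, δ⟫ = ⟪w₀ - P, h i - P⟫ := by
          have e1 : P - h i = -(h i - P) := by abel
          have e2 : δ = -(w₀ - P) := by rw [hδdef]; abel
          rw [e1, e2, inner_neg_neg]
          exact real_inner_comm _ _
        rw [h1, h2]
      linarith
    have hexp : ∀ i t, g i (w₀ + t • δ) = g i w₀ + 2 * t * ⟪w₀ - h i, δ⟫ + t ^ 2 * ‖δ‖ ^ 2 := by
      intro i t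
      simp only [hg]
      have hsplit : w₀ + t • δ - h i = (w₀ - h i) + t • δ := by abel
      rw [hsplit, norm_add_sq_real, real_inner_smul_right, norm_smul]
      simp only [Real.norm_eq_abs, mul_pow, sq_abs]
      ring
    have h1 : ∀ᶠ t in 𝓝[>] (0 : ℝ), ∀ i ∈ s, g i (w₀ + t • δ) < m := by
      rw [Filter.eventually_all_finset]
      intro i hi
      by_cases hact : g i w₀ = m
      · filter_upwards [Ioc_mem_nhdsGT (zero_lt_one (α := ℝ))] with t ht
        have hin := hinner i (Finset.mem_filter.2 ⟨hi, hact⟩)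
        rw [hexp i t, hact]
        have e1 : t * ⟪w₀ - h i, δ⟫ ≤ t * (-‖δ‖ ^ 2) := mul_le_mul_of_nonneg_left hin ht.1.le
        have e2 : t ^ 2 * ‖δ‖ ^ 2 ≤ t * ‖δ‖ ^ 2 :=
          mul_le_mul_of_nonneg_right
            (by nlinarith [mul_nonneg ht.1.le (sub_nonneg.2 ht.2)]) hδpos.le
        have e3 : 0 < t * ‖δ‖ ^ 2 := mul_pos ht.1 hδpos
        linarith
      · have hlt : g i w₀ < m :=
          lt_of_le_of_ne (Finset.le_sup' (fun j => g j w₀) hi) hact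
        have hcont : Tendsto (fun t : ℝ => g i (w₀ + t • δ)) (𝓝 0) (𝓝 (g i w₀)) := by
          have : Continuous fun t : ℝ => g i (w₀ + t • δ) :=
            (hgc i).comp (continuous_const.add (continuous_id.smul continuous_const))
          have h0 := this.tendsto 0
          simpa using h0
        exact (hcont.eventually_lt_const hlt).filter_mono nhdsWithin_le_nhds
    have h2 : ∀ᶠ t in 𝓝[>] (0 : ℝ), w₀ + t • δ ∈ C := by
      filter_upwards [Ioc_mem_nhdsGT (zero_lt_one (α := ℝ))] with t ht
      have hcomb : w₀ + t • δ = (1 - t) • w₀ + t • P := by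
        rw [hδdef]; module
      rw [hcomb]
      exact hCconv hw₀C (hKC hPK) (by linarith [ht.2]) (le_of_lt ht.1) (by ring)
    obtain ⟨t, h1t, h2t⟩ := (h1.and h2).exists
    have hlt : f (w₀ + t • δ) < m := (Finset.sup'_lt_iff hs).2 h1t
    have hge : m ≤ f (w₀ + t • δ) := isMinOn_iff.1 hmin _ h2t
    linarith
  -- Step B : m ≤ 0
  rw [hK, Finset.convexHull_eq] at hw₀K
  obtain ⟨wt, hwt0, hwt1, hwtc⟩ := hw₀K
  set B := A.image h with hB
  have hw₀eq : ∑ y ∈ B, wt y • y = w₀ := by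
    rw [← hwtc, Finset.centerMass_eq_of_sum_1 _ id hwt1]
    simp
  have hmemB : ∀ y ∈ B, ∃ i, i ∈ A ∧ h i = y := by
    intro y hy
    exact Finset.mem_image.1 hy
  set ρ : EuclideanSpace ℝ (Fin n) → EuclideanSpace ℝ (Fin n) :=
    fun y => if hy : ∃ i, i ∈ A ∧ h i = y then p hy.choose else 0 with hρ
  have hρA : ∀ y ∈ B, ∃ i, i ∈ A ∧ h i = y ∧ ρ y = p i := by
    intro y hy
    have hy' := hmemB y hy
    refine ⟨hy'.choose, hy'.choose_spec.1, hy'.choose_spec.2, ?_⟩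
    simp only [hρ, dif_pos hy']
  have hval : ∀ y ∈ B, ‖w₀ - y‖ ^ 2 - ‖x - ρ y‖ ^ 2 = m := by
    intro y hy
    obtain ⟨i, hiA, hhi, hρy⟩ := hρA y hy
    have hgi : g i w₀ = m := (Finset.mem_filter.1 hiA).2
    rw [hρy, ← hhi]
    exact hgi
  have hρlip : ∀ y ∈ B, ∀ z ∈ B, ‖y - z‖ ≤ ‖ρ y - ρ z‖ := by
    intro y hy z hz
    obtain ⟨i, hiA, hhi, hρy⟩ := hρA y hy
    obtain ⟨j, hjA, hhj, hρz⟩ := hρA z hz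
    rw [hρy, hρz, ← hhi, ← hhj]
    exact hlip i (hAs hiA) j (hAs hjA)
  set q := ∑ y ∈ B, wt y • ρ y with hq
  have hS1 : ∑ y ∈ B, wt y * ‖w₀ - y‖ ^ 2
      = (∑ y ∈ B, wt y * ‖y‖ ^ 2) - ‖w₀‖ ^ 2 := by
    have := sum_weight_norm_sub_sq B wt hwt1 w₀ (fun y => y)
    rw [hw₀eq, real_inner_self_eq_norm_sq] at this
    rw [this]; ring
  have hS2 : ∑ y ∈ B, wt y * ‖x - ρ y‖ ^ 2
      = ‖x‖ ^ 2 - 2 * ⟪x, q⟫ + ∑ y ∈ B, wt y * ‖ρ y‖ ^ 2 :=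
    sum_weight_norm_sub_sq B wt hwt1 x ρ
  have hD1 : ∑ y ∈ B, ∑ z ∈ B, wt y * wt z * ‖y - z‖ ^ 2
      = 2 * (∑ y ∈ B, wt y * ‖y‖ ^ 2) - 2 * ‖w₀‖ ^ 2 := by
    have := double_sum_norm_sub_sq B wt hwt1 (fun y => y)
    rwa [hw₀eq] at this
  have hD2 : ∑ y ∈ B, ∑ z ∈ B, wt y * wt z * ‖ρ y - ρ z‖ ^ 2
      = 2 * (∑ y ∈ B, wt y * ‖ρ y‖ ^ 2) - 2 * ‖q‖ ^ 2 :=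
    double_sum_norm_sub_sq B wt hwt1 ρ
  have hD12 : ∑ y ∈ B, ∑ z ∈ B, wt y * wt z * ‖y - z‖ ^ 2
      ≤ ∑ y ∈ B, ∑ z ∈ B, wt y * wt z * ‖ρ y - ρ z‖ ^ 2 := by
    refine Finset.sum_le_sum fun y hy => Finset.sum_le_sum fun z hz => ?_
    exact mul_le_mul_of_nonneg_left
      (pow_le_pow_left₀ (norm_nonneg _) (hρlip y hy z hz) 2)
      (mul_nonneg (hwt0 y hy) (hwt0 z hz))
  have hmeq : m = (∑ y ∈ B, wt y * ‖w₀ - y‖ ^ 2) - ∑ y ∈ B, wt y * ‖x - ρ y‖ ^ 2 := by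
    have : ∀ y ∈ B, wt y * m = wt y * ‖w₀ - y‖ ^ 2 - wt y * ‖x - ρ y‖ ^ 2 := by
      intro y hy
      rw [← hval y hy]; ring
    calc m = ∑ y ∈ B, wt y * m := by rw [← Finset.sum_mul, hwt1, one_mul]
    _ = ∑ y ∈ B, (wt y * ‖w₀ - y‖ ^ 2 - wt y * ‖x - ρ y‖ ^ 2) := Finset.sum_congr rfl this
    _ = _ := Finset.sum_sub_distrib _ _
  have hxq : ‖x - q‖ ^ 2 = ‖x‖ ^ 2 - 2 * ⟪x, q⟫ + ‖q‖ ^ 2 := norm_sub_sq_real x q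
  have hxq0 : (0 : ℝ) ≤ ‖x - q‖ ^ 2 := sq_nonneg _
  have hm0 : m ≤ 0 := by linarith
  refine ⟨w₀, fun i hi => ?_⟩
  have h1 : g i w₀ ≤ m := Finset.le_sup' (fun j => g j w₀) hi
  have h2 : ‖w₀ - h i‖ ^ 2 ≤ ‖x - p i‖ ^ 2 := by
    simp only [hg] at h1
    linarith
  exact (abs_le_of_sq_le_sq' h2 (norm_nonneg _)).2

/-- `T` is a monotone set-valued operator. -/
def IsMonotoneOp {n : ℕ}
    (T : EuclideanSpace ℝ (Fin n) → Set (EuclideanSpace ℝ (Fin n))) : Prop :=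
  ∀ x y u v, u ∈ T x → v ∈ T y → ⟪x - y, u - v⟫ ≥ 0

/-- `T` is a maximal monotone set-valued operator. -/
def IsMaximalMonotoneOp {n : ℕ}
    (T : EuclideanSpace ℝ (Fin n) → Set (EuclideanSpace ℝ (Fin n))) : Prop :=
  IsMonotoneOp T ∧
    ∀ x u, (∀ y v, v ∈ T y → ⟪x - y, u - v⟫ ≥ 0) → u ∈ T x

theorem resolvent_single_valued_and_monotone {n : ℕ}
    (T : EuclideanSpace ℝ (Fin n) → Set (EuclideanSpace ℝ (Fin n)))
    (hT : IsMaximalMonotoneOp T)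
    (β : ℝ) (hβ : 0 < β) :
    (∀ x : EuclideanSpace ℝ (Fin n), ∃! z : EuclideanSpace ℝ (Fin n),
        β⁻¹ • (x - z) ∈ T z) ∧
    (∀ J : EuclideanSpace ℝ (Fin n) → EuclideanSpace ℝ (Fin n),
        (∀ x, β⁻¹ • (x - J x) ∈ T (J x)) →
        ∀ x y, ⟪J x - J y, x - y⟫ ≥ 0) := by
  classical
  obtain ⟨hmono, hmax⟩ := hT
  have hβ' : β ≠ 0 := ne_of_gt hβ
  -- the graph of T is nonempty
  have hgr : ∃ z₀ u₀, u₀ ∈ T z₀ := by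
    by_contra hcon
    push_neg at hcon
    exact hcon 0 0 (hmax 0 0 (fun y v hv => absurd hv (hcon y v)))
  obtain ⟨z₀, u₀, hz₀⟩ := hgr
  constructor
  · -- existence and uniqueness of the resolvent
    intro x
    set ι := {zu : (EuclideanSpace ℝ (Fin n)) × (EuclideanSpace ℝ (Fin n)) // zu.2 ∈ T zu.1}
      with hι
    set pp : ι → EuclideanSpace ℝ (Fin n) := fun a => a.1.1 + β • a.1.2 with hpp
    set hh : ι → EuclideanSpace ℝ (Fin n) := fun a => a.1.1 - β • a.1.2 with hhh
    have hlip : ∀ a b : ι, ‖hh a - hh b‖ ≤ ‖pp a - pp b‖ := by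
      intro a b
      have hmab := hmono a.1.1 b.1.1 a.1.2 b.1.2 a.2 b.2
      have h1 : ‖hh a - hh b‖ ^ 2 ≤ ‖pp a - pp b‖ ^ 2 := by
        simp only [hpp, hhh]
        have e1 : a.1.1 - β • a.1.2 - (b.1.1 - β • b.1.2)
            = (a.1.1 - b.1.1) - β • (a.1.2 - b.1.2) := by
          rw [smul_sub]; abel
        have e2 : a.1.1 + β • a.1.2 - (b.1.1 + β • b.1.2)
            = (a.1.1 - b.1.1) + β • (a.1.2 - b.1.2) := by
          rw [smul_sub]; abel
        rw [e1, e2, norm_sub_sq_real, norm_add_sq_real, real_inner_smul_right]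
        have := mul_nonneg hβ.le hmab
        linarith
      exact (abs_le_of_sq_le_sq' h1 (norm_nonneg _)).2
    have hinter : (⋂ a : ι, Metric.closedBall (hh a) ‖x - pp a‖).Nonempty := by
      by_contra hcon
      rw [Set.not_nonempty_iff_eq_empty] at hcon
      set a₀ : ι := ⟨(z₀, u₀), hz₀⟩ with ha₀
      have hcompact : IsCompact (Metric.closedBall (hh a₀) ‖x - pp a₀‖) :=
        isCompact_closedBall _ _
      have hempty : Metric.closedBall (hh a₀) ‖x - pp a₀‖
          ∩ ⋂ a : ι, Metric.closedBall (hh a) ‖x - pp a‖ = ∅ := by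
        rw [hcon, Set.inter_empty]
      obtain ⟨t, ht⟩ := hcompact.elim_finite_subfamily_closed
        (fun a : ι => Metric.closedBall (hh a) ‖x - pp a‖)
        (fun a => Metric.isClosed_closedBall) hempty
      obtain ⟨w, hw⟩ := finite_kirszbraun (insert a₀ t) pp hh x (fun a _ b _ => hlip a b)
      have hwmem : w ∈ Metric.closedBall (hh a₀) ‖x - pp a₀‖
          ∩ ⋂ a ∈ t, Metric.closedBall (hh a) ‖x - pp a‖ := by
        refine ⟨?_, Set.mem_iInter₂.2 fun a ha => ?_⟩
        · rw [Metric.mem_closedBall, dist_eq_norm]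
          exact hw a₀ (Finset.mem_insert_self _ _)
        · rw [Metric.mem_closedBall, dist_eq_norm]
          exact hw a (Finset.mem_insert_of_mem ha)
      rw [ht] at hwmem
      exact Set.notMem_empty w hwmem
    obtain ⟨w, hwI⟩ := hinter
    set z : EuclideanSpace ℝ (Fin n) := (2 : ℝ)⁻¹ • (w + x) with hz
    have hw2z : w = (2 : ℝ) • z - x := by
      rw [hz, smul_smul]
      norm_num
    have hrel : ∀ y v, v ∈ T y → ⟪z - y, β⁻¹ • (x - z) - v⟫ ≥ 0 := by
      intro y v hv
      set a : ι := ⟨(y, v), hv⟩ with ha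
      have hmem := Set.mem_iInter.1 hwI a
      rw [Metric.mem_closedBall, dist_eq_norm] at hmem
      have hsq : ‖w - hh a‖ ^ 2 ≤ ‖x - pp a‖ ^ 2 :=
        pow_le_pow_left₀ (norm_nonneg _) hmem 2
      have e1 : w - hh a = (2 : ℝ) • (z - y) - (x - y - β • v) := by
        rw [hw2z]
        simp only [hhh, ha]
        module
      have e2 : x - pp a = x - y - β • v := by
        simp only [hpp, ha]
        abel
      rw [e1, e2] at hsq
      have hexp : ‖(2 : ℝ) • (z - y) - (x - y - β • v)‖ ^ 2
          = 4 * ‖z - y‖ ^ 2 - 4 * ⟪z - y, x - y - β • v⟫ + ‖x - y - β • v‖ ^ 2 := by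
        rw [norm_sub_sq_real, real_inner_smul_left, norm_smul]
        simp only [Real.norm_eq_abs, mul_pow, sq_abs]
        norm_num
        ring
      rw [hexp] at hsq
      have hcD : ‖z - y‖ ^ 2 ≤ ⟪z - y, x - y - β • v⟫ := by linarith
      have e3 : β⁻¹ • ((x - y - β • v) - (z - y)) = β⁻¹ • (x - z) - v := by
        have h9 : (x - y - β • v) - (z - y) = (x - z) - β • v := by abel
        rw [h9, smul_sub, smul_smul, inv_mul_cancel₀ hβ', one_smul]
      rw [← e3, real_inner_smul_right, inner_sub_right, real_inner_self_eq_norm_sq]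
      have : (0:ℝ) ≤ ⟪z - y, x - y - β • v⟫ - ‖z - y‖ ^ 2 := by linarith
      exact mul_nonneg (inv_nonneg.2 hβ.le) this
    have hzT : β⁻¹ • (x - z) ∈ T z := hmax z _ hrel
    refine ⟨z, hzT, ?_⟩
    intro z' hz'
    have hm := hmono z' z (β⁻¹ • (x - z')) (β⁻¹ • (x - z)) hz' hzT
    have e4 : β⁻¹ • (x - z') - β⁻¹ • (x - z) = -(β⁻¹ • (z' - z)) := by
      rw [← smul_sub, ← smul_neg]
      congr 1
      abel
    rw [e4, inner_neg_right, real_inner_smul_right, real_inner_self_eq_norm_sq] at hm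
    have h5 : ‖z' - z‖ ^ 2 ≤ 0 := by
      by_contra h6
      push_neg at h6
      have := mul_pos (inv_pos.2 hβ) h6
      linarith
    have h7 : ‖z' - z‖ = 0 := by
      have := sq_nonneg ‖z' - z‖
      have h8 : ‖z' - z‖ ^ 2 = 0 := le_antisymm h5 this
      exact pow_eq_zero_iff (by norm_num) |>.1 h8
    rw [norm_eq_zero, sub_eq_zero] at h7
    exact h7
  · -- monotonicity of the resolvent map
    intro J hJ x y
    have hm := hmono (J x) (J y) (β⁻¹ • (x - J x)) (β⁻¹ • (y - J y)) (hJ x) (hJ y)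
    have e1 : β⁻¹ • (x - J x) - β⁻¹ • (y - J y) = β⁻¹ • ((x - y) - (J x - J y)) := by
      rw [← smul_sub]
      congr 1
      abel
    rw [e1, real_inner_smul_right, inner_sub_right, real_inner_self_eq_norm_sq] at hm
    have h2 : 0 ≤ ⟪J x - J y, x - y⟫ - ‖J x - J y‖ ^ 2 := by
      by_contra h3
      push_neg at h3
      have := mul_neg_of_pos_of_neg (inv_pos.2 hβ) h3
      linarith
    have := sq_nonneg ‖J x - J y‖
    linarith
end

section
/- Let S ⊆ ℝⁿ be nonempty and let (x^k)_{k∈ℕ} be a sequence in ℝⁿ that is Fejér convergent to S. If some cluster point x* of (x^k) belongs to S (i.e., some subsequence of (x^k) converges to x* ∈ S), then the whole sequence (x^k) converges to x*. -/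
open Filter

/-- The sequence `x` is Fejér convergent to the set `S`. -/
def FejerConvergent {n : ℕ}
    (x : ℕ → EuclideanSpace ℝ (Fin n)) (S : Set (EuclideanSpace ℝ (Fin n))) : Prop :=
  ∀ p ∈ S, ∃ k₀ : ℕ, ∀ k ≥ k₀, ‖x (k + 1) - p‖ ≤ ‖x k - p‖

theorem fejer_cluster_point_in_set_implies_convergence {n : ℕ}
    (S : Set (EuclideanSpace ℝ (Fin n))) (hS : S.Nonempty)
    (x : ℕ → EuclideanSpace ℝ (Fin n))
    (hx : FejerConvergent x S)
    (xstar : EuclideanSpace ℝ (Fin n)) (hxstarS : xstar ∈ S)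
    (hcluster : ∃ φ : ℕ → ℕ, StrictMono φ ∧
        Tendsto (fun k => x (φ k)) atTop (nhds xstar)) :
    Tendsto x atTop (nhds xstar) := by
  obtain ⟨φ, hφ, hφt⟩ := hcluster
  obtain ⟨k₀, hk₀⟩ := hx xstar hxstarS
  have mono : ∀ a b : ℕ, k₀ ≤ a → a ≤ b → ‖x b - xstar‖ ≤ ‖x a - xstar‖ := by
    intro a b ha hab
    induction b with
    | zero => have : a = 0 := Nat.le_zero.mp hab; simp [this]
    | succ b ih =>
      rcases Nat.lt_or_ge a (b + 1) with h | h
      · exact le_trans (hk₀ b (by omega)) (ih (by omega))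
      · have : a = b + 1 := by omega
        simp [this]
  rw [Metric.tendsto_atTop] at hφt ⊢
  intro ε hε
  obtain ⟨N, hN⟩ := hφt ε hε
  refine ⟨φ (max N k₀), fun k hk => ?_⟩
  have h1 : dist (x (φ (max N k₀))) xstar < ε := hN _ (le_max_left _ _)
  have h2 : k₀ ≤ φ (max N k₀) := le_trans (le_max_right _ _) (hφ.id_le _)
  calc dist (x k) xstar = ‖x k - xstar‖ := dist_eq_norm _ _
    _ ≤ ‖x (φ (max N k₀)) - xstar‖ := mono _ _ h2 hk
    _ = dist (x (φ (max N k₀))) xstar := (dist_eq_norm _ _).symm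
    _ < ε := h1
end

section
/- (Termination of the Armijo-type linesearch.) Let A : ℝⁿ → ℝⁿ be continuous, let B : ℝⁿ → Set ℝⁿ be maximal monotone, and let β > 0, δ ∈ (0,1), θ ∈ (0,1). Let z, J ∈ ℝⁿ with z ≠ J satisfy z − βA(z) ∈ J + βB(J), i.e., (z − βA(z) − J)/β ∈ B(J). Let (u_j)_{j∈ℕ} be a bounded sequence with u_j ∈ B(θ^j J + (1−θ^j) z) for every j. Then there exists j ∈ ℕ such that ⟨A(θ^j J + (1−θ^j) z) + u_j, z − J⟩ ≥ (δ/β)‖z − J‖². -/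
open scoped RealInnerProductSpace

theorem linesearch_terminates {n : ℕ}
    (A : EuclideanSpace ℝ (Fin n) → EuclideanSpace ℝ (Fin n))
    (hA : Continuous A)
    (B : EuclideanSpace ℝ (Fin n) → Set (EuclideanSpace ℝ (Fin n)))
    (hB : IsMaximalMonotoneOp B)
    (β δ θ : ℝ) (hβ : 0 < β) (hδ : δ ∈ Set.Ioo (0 : ℝ) 1) (hθ : θ ∈ Set.Ioo (0 : ℝ) 1)
    (z J : EuclideanSpace ℝ (Fin n)) (hzJ : z ≠ J)
    (hJ : β⁻¹ • (z - β • A z - J) ∈ B J)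
    (u : ℕ → EuclideanSpace ℝ (Fin n))
    (hu_bdd : Bornology.IsBounded (Set.range u))
    (hu : ∀ j : ℕ, u j ∈ B (θ ^ j • J + (1 - θ ^ j) • z)) :
    ∃ j : ℕ, ⟪A (θ ^ j • J + (1 - θ ^ j) • z) + u j, z - J⟫ ≥
      (δ / β) * ‖z - J‖ ^ 2 := by
  by_contra hcon
  push_neg at hcon
  set x : ℕ → EuclideanSpace ℝ (Fin n) := fun j => θ ^ j • J + (1 - θ ^ j) • z with hx
  -- extract convergent subsequence of u
  obtain ⟨ub, -, φ, hφ, hub⟩ := tendsto_subseq_of_bounded hu_bdd (fun j => Set.mem_range_self j)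
  -- x (φ k) → z
  have hθ0 : Filter.Tendsto (fun k => θ ^ (φ k)) Filter.atTop (nhds 0) :=
    (tendsto_pow_atTop_nhds_zero_of_lt_one hθ.1.le hθ.2).comp hφ.tendsto_atTop
  have hxz : Filter.Tendsto (fun k => x (φ k)) Filter.atTop (nhds z) := by
    have : Filter.Tendsto (fun k => θ ^ (φ k) • J + (1 - θ ^ (φ k)) • z)
        Filter.atTop (nhds ((0 : ℝ) • J + (1 - 0 : ℝ) • z)) :=
      (hθ0.smul_const J).add ((tendsto_const_nhds.sub hθ0).smul_const z)
    simpa using this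
  -- ub ∈ B z by maximal monotonicity
  have hubBz : ub ∈ B z := by
    apply hB.2
    intro y v hv
    have hineq : ∀ k, (0 : ℝ) ≤ ⟪x (φ k) - y, u (φ k) - v⟫ := fun k =>
      hB.1 (x (φ k)) y (u (φ k)) v (hu (φ k)) hv
    have hlim : Filter.Tendsto (fun k => ⟪x (φ k) - y, u (φ k) - v⟫)
        Filter.atTop (nhds ⟪z - y, ub - v⟫) :=
      (hxz.sub tendsto_const_nhds).inner (hub.sub tendsto_const_nhds)
    exact ge_of_tendsto' hlim hineq
  -- monotonicity between (z, ub) and (J, w)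
  have hmono := hB.1 z J ub (β⁻¹ • (z - β • A z - J)) hubBz hJ
  have hkey : ⟪A z + ub, z - J⟫ ≥ β⁻¹ * ‖z - J‖ ^ 2 := by
    have h1 : ⟪z - J, ub⟫ - ⟪z - J, β⁻¹ • (z - β • A z - J)⟫ ≥ 0 := by
      simpa [inner_sub_right] using hmono
    have h2 : ⟪z - J, β⁻¹ • (z - β • A z - J)⟫
        = β⁻¹ * ‖z - J‖ ^ 2 - ⟪z - J, A z⟫ := by
      have : z - β • A z - J = (z - J) - β • A z := by abel
      rw [this, inner_smul_right, inner_sub_right, inner_smul_right,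
        real_inner_self_eq_norm_sq]
      field_simp
    have h3 : ⟪A z + ub, z - J⟫ = ⟪z - J, A z⟫ + ⟪z - J, ub⟫ := by
      rw [real_inner_comm, inner_add_right]
    linarith [h1, h2.symm ▸ h1]
  -- limit of the contradiction hypothesis
  have hlim2 : Filter.Tendsto (fun k => ⟪A (x (φ k)) + u (φ k), z - J⟫)
      Filter.atTop (nhds ⟪A z + ub, z - J⟫) :=
    (((hA.tendsto z).comp hxz).add hub).inner tendsto_const_nhds
  have hle : ⟪A z + ub, z - J⟫ ≤ (δ / β) * ‖z - J‖ ^ 2 :=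
    le_of_tendsto' hlim2 fun k => (hcon (φ k)).le
  have hnorm : 0 < ‖z - J‖ ^ 2 := pow_pos (norm_sub_pos_iff.mpr hzJ) 2
  have hlt : δ / β < β⁻¹ := by
    rw [div_lt_iff₀ hβ, inv_mul_cancel₀ hβ.ne']
    exact hδ.2
  have := mul_lt_mul_of_pos_right hlt hnorm
  linarith
end

section
/- In the setting of the algorithm described in the context, for every i ∈ {1,…,m}, lim_{k→∞} ⟨A_i(x̄_i^k) + ū_i^k, z_i^k − x̄_i^k⟩ = 0. -/
open scoped RealInnerProductSpace
open Filter

lemma proj_sq_ineq {n : ℕ} {K : Set (EuclideanSpace ℝ (Fin n))} (hK : Convex ℝ K)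
    {z p : EuclideanSpace ℝ (Fin n)} (hpK : p ∈ K)
    (hmin : ∀ y ∈ K, ‖p - z‖ ≤ ‖y - z‖) {y : EuclideanSpace ℝ (Fin n)} (hy : y ∈ K) :
    ‖p - z‖ ^ 2 + ‖y - p‖ ^ 2 ≤ ‖y - z‖ ^ 2 := by
  have hne : Nonempty K := ⟨⟨p, hpK⟩⟩
  have heq : ‖z - p‖ = ⨅ w : K, ‖z - w‖ := by
    apply le_antisymm
    · exact le_ciInf fun w => by
        simpa [norm_sub_rev] using hmin w w.2
    · exact ciInf_le ⟨0, fun _ ⟨w, hw⟩ => hw ▸ norm_nonneg _⟩ (⟨p, hpK⟩ : K)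
  have hinner : ⟪z - p, y - p⟫ ≤ 0 :=
    (norm_eq_iInf_iff_real_inner_le_zero hK hpK).mp heq y hy
  have hexp : ‖y - z‖ ^ 2 = ‖y - p‖ ^ 2 - 2 * ⟪y - p, z - p⟫ + ‖z - p‖ ^ 2 := by
    rw [show y - z = (y - p) - (z - p) by abel, norm_sub_sq_real]
  have hcomm : ⟪y - p, z - p⟫ = ⟪z - p, y - p⟫ := real_inner_comm _ _
  have h1 : ‖z - p‖ = ‖p - z‖ := norm_sub_rev _ _
  have h1sq : ‖z - p‖ ^ 2 = ‖p - z‖ ^ 2 := by rw [h1]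
  linarith

set_option maxHeartbeats 2000000 in
theorem algorithm_gap_to_zero {n m : ℕ} (hm : 1 ≤ m)
    (A : ℕ → EuclideanSpace ℝ (Fin n) → EuclideanSpace ℝ (Fin n))
    (B : ℕ → EuclideanSpace ℝ (Fin n) → Set (EuclideanSpace ℝ (Fin n)))
    (hA_cont : ∀ i ∈ Finset.Icc 1 m, Continuous (A i))
    (hA_mono : ∀ i ∈ Finset.Icc 1 m, ∀ x y, ⟪A i x - A i y, x - y⟫ ≥ 0)
    (hB_max : ∀ i ∈ Finset.Icc 1 m, IsMaximalMonotoneOp (B i))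
    (Sstar : Set (EuclideanSpace ℝ (Fin n)))
    (hSstar : Sstar = ⋂ i ∈ Finset.Icc 1 m, {x | -A i x ∈ B i x})
    (X : Set (EuclideanSpace ℝ (Fin n)))
    (hXne : X.Nonempty) (hXcl : IsClosed X) (hXcv : Convex ℝ X)
    (hXdom : ∀ i ∈ Finset.Icc 1 m, ∀ x ∈ X, (B i x).Nonempty)
    (hSX : (Sstar ∩ X).Nonempty)
    (θ δ : ℝ) (hθ : θ ∈ Set.Ioo (0 : ℝ) 1) (hδ : δ ∈ Set.Ioo (0 : ℝ) 1)
    (βlo βhi : ℝ) (hβlo : 0 < βlo) (hβle : βlo ≤ βhi)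
    (β : ℕ → ℝ) (hβ : ∀ k, β k ∈ Set.Icc βlo βhi)
    (R : ℝ) (hR : 0 < R)
    (x : ℕ → EuclideanSpace ℝ (Fin n))
    (z J xbar ubar : ℕ → ℕ → EuclideanSpace ℝ (Fin n))
    (α : ℕ → ℕ → ℝ)
    (p : ℕ → ℕ → EuclideanSpace ℝ (Fin n))
    (PX : EuclideanSpace ℝ (Fin n) → EuclideanSpace ℝ (Fin n))
    (hPX : ∀ w, PX w ∈ X ∧ ∀ y ∈ X, ‖PX w - w‖ ≤ ‖y - w‖)
    (hxX : ∀ k, x k ∈ X)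
    (hzX : ∀ k, ∀ i ∈ Finset.Icc 1 (m + 1), z k i ∈ X)
    (hz1 : ∀ k, z k 1 = x k)
    (hxk1 : ∀ k, x (k + 1) = z k (m + 1))
    (hα : ∀ k, ∀ i ∈ Finset.Icc 1 m, α k i ∈ Set.Ioc (0 : ℝ) 1)
    (hJ : ∀ k, ∀ i ∈ Finset.Icc 1 m,
      (β k)⁻¹ • (z k i - β k • A i (z k i) - J k i) ∈ B i (J k i))
    (hstop : ∀ k, ∀ i ∈ Finset.Icc 1 m, z k i = J k i →
      z k (i + 1) = z k i ∧ xbar k i = z k i ∧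
        ubar k i ∈ B i (z k i) ∧ ‖ubar k i‖ ≤ R)
    (hsearch : ∀ k, ∀ i ∈ Finset.Icc 1 m, z k i ≠ J k i →
      ∃ j : ℕ, α k i = θ ^ j ∧
        xbar k i = α k i • J k i + (1 - α k i) • z k i ∧
        ubar k i ∈ B i (xbar k i) ∧ ‖ubar k i‖ ≤ R ∧
        ⟪A i (xbar k i) + ubar k i, z k i - J k i⟫ ≥
          (δ / β k) * ‖z k i - J k i‖ ^ 2 ∧
        ∀ j' < j, ∀ u ∈ B i (θ ^ j' • J k i + (1 - θ ^ j') • z k i), ‖u‖ ≤ R →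
          ⟪A i (θ ^ j' • J k i + (1 - θ ^ j') • z k i) + u, z k i - J k i⟫ <
            (δ / β k) * ‖z k i - J k i‖ ^ 2)
    (hBne : ∀ k, ∀ i ∈ Finset.Icc 1 m, ∀ j : ℕ,
      ∃ u ∈ B i (θ ^ j • J k i + (1 - θ ^ j) • z k i), ‖u‖ ≤ R)
    (hp : ∀ k, ∀ i ∈ Finset.Icc 1 m,
      p k i ∈ {y : EuclideanSpace ℝ (Fin n) |
          ⟪A i (xbar k i) + ubar k i, y - xbar k i⟫ ≤ 0} ∧
        ∀ y ∈ {y : EuclideanSpace ℝ (Fin n) |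
            ⟪A i (xbar k i) + ubar k i, y - xbar k i⟫ ≤ 0},
          ‖p k i - z k i‖ ≤ ‖y - z k i‖)
    (hznext : ∀ k, ∀ i ∈ Finset.Icc 1 m, z k (i + 1) = PX (p k i)) :
    ∀ i ∈ Finset.Icc 1 m,
      Tendsto (fun k => ⟪A i (xbar k i) + ubar k i, z k i - xbar k i⟫)
        atTop (nhds (0 : ℝ)) := by
  obtain ⟨xs, hxsS, hxsX⟩ := hSX
  subst hSstar
  have hxsB : ∀ i ∈ Finset.Icc 1 m, -A i xs ∈ B i xs := by
    intro i hi
    simp only [Set.mem_iInter, Set.mem_setOf_eq] at hxsS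
    exact hxsS i hi
  have hβpos : ∀ k, 0 < β k := fun k => lt_of_lt_of_le hβlo (hβ k).1
  have hβhi : ∀ k, β k ≤ βhi := fun k => (hβ k).2
  have hβhipos : 0 < βhi := lt_of_lt_of_le hβlo hβle
  -- ubar properties
  have hubar : ∀ k, ∀ i ∈ Finset.Icc 1 m,
      ubar k i ∈ B i (xbar k i) ∧ ‖ubar k i‖ ≤ R := by
    intro k i hi
    by_cases h : z k i = J k i
    · obtain ⟨_, hx, hb, hr⟩ := hstop k i hi h
      exact ⟨hx ▸ hb, hr⟩
    · obtain ⟨j, _, _, hb, hr, _, _⟩ := hsearch k i hi h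
      exact ⟨hb, hr⟩
  -- xs lies in every halfspace
  have hHxs : ∀ k, ∀ i ∈ Finset.Icc 1 m,
      ⟪A i (xbar k i) + ubar k i, xs - xbar k i⟫ ≤ 0 := by
    intro k i hi
    have hmB := (hB_max i hi).1 (xbar k i) xs (ubar k i) (-(A i xs))
      (hubar k i hi).1 (hxsB i hi)
    have hmA := hA_mono i hi (xbar k i) xs
    simp only [inner_sub_left, inner_sub_right, inner_add_left, inner_neg_right,
      sub_neg_eq_add, inner_add_right, ge_iff_le] at hmB hmA ⊢
    linarith [real_inner_comm (ubar k i) xs, real_inner_comm (ubar k i) (xbar k i),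
      real_inner_comm (A i xs) (xbar k i), real_inner_comm (A i xs) xs,
      real_inner_comm (xbar k i) (ubar k i), real_inner_comm xs (ubar k i)]
  -- gap is nonnegative
  have hgap0 : ∀ k, ∀ i ∈ Finset.Icc 1 m,
      0 ≤ ⟪A i (xbar k i) + ubar k i, z k i - xbar k i⟫ := by
    intro k i hi
    by_cases h : z k i = J k i
    · obtain ⟨_, hx, _, _⟩ := hstop k i hi h
      simp [hx]
    · obtain ⟨j, _, hx, _, _, hineq, _⟩ := hsearch k i hi h
      have hzx : z k i - xbar k i = α k i • (z k i - J k i) := by rw [hx]; module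
      rw [hzx, real_inner_smul_right]
      have hα' := hα k i hi
      have h0 : (0:ℝ) ≤ (δ / β k) * ‖z k i - J k i‖ ^ 2 :=
        mul_nonneg (div_nonneg hδ.1.le (hβpos k).le) (sq_nonneg _)
      exact mul_nonneg hα'.1.le (le_trans h0 hineq)
  -- key per-step inequality
  have hkey : ∀ k, ∀ i ∈ Finset.Icc 1 m,
      ‖z k (i + 1) - xs‖ ^ 2 ≤ ‖z k i - xs‖ ^ 2 ∧
      ⟪A i (xbar k i) + ubar k i, z k i - xbar k i⟫ ^ 2 ≤
        ‖A i (xbar k i) + ubar k i‖ ^ 2 *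
          (‖z k i - xs‖ ^ 2 - ‖z k (i + 1) - xs‖ ^ 2) := by
    intro k i hi
    by_cases h : z k i = J k i
    · obtain ⟨hz', hx, _, _⟩ := hstop k i hi h
      rw [hz', hx]
      exact ⟨le_refl _, by simp⟩
    · have hHconv : Convex ℝ {y : EuclideanSpace ℝ (Fin n) |
          ⟪A i (xbar k i) + ubar k i, y - xbar k i⟫ ≤ 0} := by
        have hset : {y : EuclideanSpace ℝ (Fin n) |
              ⟪A i (xbar k i) + ubar k i, y - xbar k i⟫ ≤ 0}
            = {y | ⟪A i (xbar k i) + ubar k i, y⟫ ≤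
                ⟪A i (xbar k i) + ubar k i, xbar k i⟫} := by
          ext y; simp [inner_sub_right, sub_nonpos]
        rw [hset]
        exact convex_halfSpace_le
          ⟨fun a b => inner_add_right _ _ _, fun c a => real_inner_smul_right _ _ _⟩ _
      obtain ⟨hpH, hpmin⟩ := hp k i hi
      have h1 := proj_sq_ineq hHconv hpH hpmin (hHxs k i hi)
      obtain ⟨hPXmem, hPXmin⟩ := hPX (p k i)
      have h2 := proj_sq_ineq hXcv hPXmem hPXmin hxsX
      rw [hznext k i hi]
      have e1 : ‖xs - z k i‖ = ‖z k i - xs‖ := norm_sub_rev _ _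
      have e2 : ‖xs - PX (p k i)‖ = ‖PX (p k i) - xs‖ := norm_sub_rev _ _
      have e1sq : ‖xs - z k i‖ ^ 2 = ‖z k i - xs‖ ^ 2 := by rw [e1]
      have e2sq : ‖xs - PX (p k i)‖ ^ 2 = ‖PX (p k i) - xs‖ ^ 2 := by rw [e2]
      have hd : ‖p k i - z k i‖ ^ 2 ≤ ‖z k i - xs‖ ^ 2 - ‖PX (p k i) - xs‖ ^ 2 := by
        nlinarith [sq_nonneg ‖PX (p k i) - p k i‖]
      constructor
      · nlinarith [sq_nonneg ‖PX (p k i) - p k i‖, sq_nonneg ‖p k i - z k i‖]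
      · have hgap := hgap0 k i hi
        have hsplit : ⟪A i (xbar k i) + ubar k i, z k i - xbar k i⟫
            = ⟪A i (xbar k i) + ubar k i, z k i - p k i⟫
              + ⟪A i (xbar k i) + ubar k i, p k i - xbar k i⟫ := by
          rw [← inner_add_right]; congr 1; abel
        have hcs : ⟪A i (xbar k i) + ubar k i, z k i - p k i⟫ ≤
            ‖A i (xbar k i) + ubar k i‖ * ‖z k i - p k i‖ := real_inner_le_norm _ _
        have hpHle : ⟪A i (xbar k i) + ubar k i, p k i - xbar k i⟫ ≤ 0 := hpH
        have hle : ⟪A i (xbar k i) + ubar k i, z k i - xbar k i⟫ ≤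
            ‖A i (xbar k i) + ubar k i‖ * ‖z k i - p k i‖ := by linarith
        have hsq : ⟪A i (xbar k i) + ubar k i, z k i - xbar k i⟫ ^ 2 ≤
            (‖A i (xbar k i) + ubar k i‖ * ‖z k i - p k i‖) ^ 2 :=
          pow_le_pow_left₀ hgap hle 2
        have hnr : ‖z k i - p k i‖ = ‖p k i - z k i‖ := norm_sub_rev _ _
        have hnrsq : ‖z k i - p k i‖ ^ 2 = ‖p k i - z k i‖ ^ 2 := by rw [hnr]
        nlinarith [sq_nonneg ‖A i (xbar k i) + ubar k i‖,
          mul_le_mul_of_nonneg_left hd (sq_nonneg ‖A i (xbar k i) + ubar k i‖)]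
  -- the Fejér sequence
  set a : ℕ → ℝ := fun k => ‖z k 1 - xs‖ ^ 2 with ha
  have hchain : ∀ k, ∀ i j : ℕ, 1 ≤ i → i ≤ j → j ≤ m + 1 →
      ‖z k j - xs‖ ^ 2 ≤ ‖z k i - xs‖ ^ 2 := by
    intro k i j h1i hij
    induction j, hij using Nat.le_induction with
    | base => intro _; exact le_rfl
    | succ j hij ih =>
      intro hjm
      have h1j : 1 ≤ j := le_trans h1i hij
      have hjle : j ≤ m := Nat.succ_le_succ_iff.mp hjm
      exact le_trans (hkey k j (Finset.mem_Icc.mpr ⟨h1j, hjle⟩)).1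
        (ih (le_trans hjle (Nat.le_succ m)))
  have hsucc : ∀ k, a (k + 1) ≤ a k := by
    intro k
    have : a (k + 1) = ‖z k (m + 1) - xs‖ ^ 2 := by
      simp only [ha]; rw [hz1, hxk1]
    rw [this]
    exact hchain k 1 (m + 1) le_rfl (le_trans hm (Nat.le_succ m)) le_rfl
  have hanti : Antitone a := antitone_nat_of_succ_le hsucc
  have hbdd : BddBelow (Set.range a) := ⟨0, by rintro _ ⟨k, rfl⟩; positivity⟩
  have hL : Tendsto a atTop (nhds (⨅ k, a k)) := tendsto_atTop_ciInf hanti hbdd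
  have hL' : Tendsto (fun k => a (k + 1)) atTop (nhds (⨅ k, a k)) :=
    (tendsto_add_atTop_iff_nat 1).mpr hL
  -- bounded iterates
  set D : ℝ := ‖z 0 1 - xs‖ with hD
  have hD0 : 0 ≤ D := norm_nonneg _
  have hzb : ∀ k, ∀ j, 1 ≤ j → j ≤ m + 1 → ‖z k j - xs‖ ≤ D := by
    intro k j h1j hjm
    have h2 : ‖z k j - xs‖ ^ 2 ≤ a 0 :=
      le_trans (hchain k 1 j le_rfl h1j hjm) (hanti (Nat.zero_le k))
    have h3 : a 0 = D ^ 2 := rfl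
    rw [h3] at h2
    exact (pow_le_pow_iff_left₀ (norm_nonneg _) hD0 two_ne_zero).mp h2
  -- now fix i
  intro i hi
  obtain ⟨h1i, him⟩ := Finset.mem_Icc.mp hi
  have him1 : i ≤ m + 1 := le_trans him (Nat.le_succ m)
  have hi1m1 : i + 1 ≤ m + 1 := Nat.succ_le_succ him
  -- bound on A i over the ball of radius D
  obtain ⟨C1, hC1⟩ :=
    (isCompact_closedBall xs D).exists_bound_of_continuousOn (hA_cont i hi).continuousOn
  have hxsball : xs ∈ Metric.closedBall xs D := by
    simp [Metric.mem_closedBall, hD0]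
  have hC1xs : ‖A i xs‖ ≤ C1 := hC1 xs hxsball
  have hC10 : 0 ≤ C1 := le_trans (norm_nonneg _) hC1xs
  have hzball : ∀ k, z k i ∈ Metric.closedBall xs D := by
    intro k
    rw [Metric.mem_closedBall, dist_eq_norm]
    exact hzb k i h1i him1
  set D2 : ℝ := D + βhi * (2 * C1) with hD2def
  have hD2pos : 0 ≤ D2 := by
    have : 0 ≤ βhi * (2 * C1) := by positivity
    linarith
  have hDD2 : D ≤ D2 := by
    have : 0 ≤ βhi * (2 * C1) := by positivity
    linarith
  -- bound on J
  have hJb : ∀ k, ‖J k i - xs‖ ≤ D2 := by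
    intro k
    have hb := hβpos k
    have hmono := (hB_max i hi).1 (J k i) xs _ (-(A i xs)) (hJ k i hi) (hxsB i hi)
    rw [ge_iff_le, sub_neg_eq_add, inner_add_right, real_inner_smul_right] at hmono
    have h2 : 0 ≤ ⟪J k i - xs, z k i - β k • A i (z k i) - J k i⟫
        + β k * ⟪J k i - xs, A i xs⟫ := by
      have hmul := mul_nonneg hb.le hmono
      have hcancel : β k * ((β k)⁻¹ * ⟪J k i - xs, z k i - β k • A i (z k i) - J k i⟫
          + ⟪J k i - xs, A i xs⟫)
          = ⟪J k i - xs, z k i - β k • A i (z k i) - J k i⟫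
            + β k * ⟪J k i - xs, A i xs⟫ := by
        field_simp
      rw [hcancel] at hmul
      exact hmul
    have hq : ⟪J k i - xs, J k i - xs⟫ ≤ ⟪J k i - xs, z k i - xs⟫
        - β k * ⟪J k i - xs, A i (z k i) - A i xs⟫ := by
      simp only [inner_sub_right, real_inner_smul_right] at h2 ⊢
      linarith
    have hNsq : ‖J k i - xs‖ ^ 2 = ⟪J k i - xs, J k i - xs⟫ :=
      (real_inner_self_eq_norm_sq _).symm
    have hcs1 : ⟪J k i - xs, z k i - xs⟫ ≤ ‖J k i - xs‖ * ‖z k i - xs‖ :=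
      real_inner_le_norm _ _
    have hcs2 : |⟪J k i - xs, A i (z k i) - A i xs⟫| ≤
        ‖J k i - xs‖ * ‖A i (z k i) - A i xs‖ := abs_real_inner_le_norm _ _
    have hAz : ‖A i (z k i) - A i xs‖ ≤ 2 * C1 := by
      have := norm_sub_le (A i (z k i)) (A i xs)
      have h4 := hC1 _ (hzball k)
      linarith
    have hzD := hzb k i h1i him1
    have hN0 : (0:ℝ) ≤ ‖J k i - xs‖ := norm_nonneg _
    have h5 : -⟪J k i - xs, A i (z k i) - A i xs⟫ ≤ ‖J k i - xs‖ * (2 * C1) :=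
      le_trans (neg_le_abs _) (le_trans hcs2 (mul_le_mul_of_nonneg_left hAz hN0))
    have h6 : β k * -⟪J k i - xs, A i (z k i) - A i xs⟫ ≤
        βhi * (‖J k i - xs‖ * (2 * C1)) :=
      le_trans (mul_le_mul_of_nonneg_left h5 hb.le)
        (mul_le_mul_of_nonneg_right (hβhi k) (by positivity))
    have h7 : ⟪J k i - xs, z k i - xs⟫ ≤ ‖J k i - xs‖ * D :=
      le_trans hcs1 (mul_le_mul_of_nonneg_left hzD hN0)
    have h8 : ‖J k i - xs‖ * D2 = ‖J k i - xs‖ * D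
        + βhi * (‖J k i - xs‖ * (2 * C1)) := by
      rw [hD2def]; ring
    have key : ‖J k i - xs‖ ^ 2 ≤ ‖J k i - xs‖ * D2 := by
      rw [hNsq]; linarith
    by_cases hN : ‖J k i - xs‖ = 0
    · rw [hN]; exact hD2pos
    · have hNpos : 0 < ‖J k i - xs‖ := lt_of_le_of_ne hN0 (Ne.symm hN)
      have key' : ‖J k i - xs‖ * ‖J k i - xs‖ ≤ ‖J k i - xs‖ * D2 := by
        nlinarith [key]
      exact le_of_mul_le_mul_left key' hNpos
  -- bound on xbar
  have hxb : ∀ k, ‖xbar k i - xs‖ ≤ D2 := by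
    intro k
    by_cases h : z k i = J k i
    · rw [(hstop k i hi h).2.1]
      exact le_trans (hzb k i h1i him1) hDD2
    · obtain ⟨j, _, hx, _⟩ := hsearch k i hi h
      have hα' := hα k i hi
      have hcomb : xbar k i - xs = α k i • (J k i - xs) + (1 - α k i) • (z k i - xs) := by
        rw [hx]; module
      calc ‖xbar k i - xs‖
          ≤ ‖α k i • (J k i - xs)‖ + ‖(1 - α k i) • (z k i - xs)‖ := by
            rw [hcomb]; exact norm_add_le _ _
        _ = α k i * ‖J k i - xs‖ + (1 - α k i) * ‖z k i - xs‖ := by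
            rw [norm_smul, norm_smul, Real.norm_of_nonneg hα'.1.le,
              Real.norm_of_nonneg (by linarith [hα'.2])]
        _ ≤ α k i * D2 + (1 - α k i) * D2 := add_le_add
            (mul_le_mul_of_nonneg_left (hJb k) hα'.1.le)
            (mul_le_mul_of_nonneg_left (le_trans (hzb k i h1i him1) hDD2)
              (by linarith [hα'.2]))
        _ = D2 := by ring
  -- bound on the normal vectors
  obtain ⟨C3, hC3⟩ :=
    (isCompact_closedBall xs D2).exists_bound_of_continuousOn (hA_cont i hi).continuousOn
  have hvM : ∀ k, ‖A i (xbar k i) + ubar k i‖ ≤ C3 + R := by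
    intro k
    have hball : xbar k i ∈ Metric.closedBall xs D2 := by
      rw [Metric.mem_closedBall, dist_eq_norm]; exact hxb k
    exact le_trans (norm_add_le _ _) (add_le_add (hC3 _ hball) (hubar k i hi).2)
  have hM0 : (0:ℝ) ≤ C3 + R := le_trans (norm_nonneg _) (hvM 0)
  -- limits of the shell sequences
  have hSa : ∀ k, ‖z k i - xs‖ ^ 2 ≤ a k := fun k => hchain k 1 i le_rfl h1i him1
  have hS1a : ∀ k, ‖z k (i + 1) - xs‖ ^ 2 ≤ a k :=
    fun k => hchain k 1 (i + 1) le_rfl (Nat.succ_le_succ (Nat.zero_le i)) hi1m1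
  have haS : ∀ k, a (k + 1) ≤ ‖z k (i + 1) - xs‖ ^ 2 := by
    intro k
    have he : a (k + 1) = ‖z k (m + 1) - xs‖ ^ 2 := by
      simp only [ha]; rw [hz1, hxk1]
    rw [he]
    exact hchain k (i + 1) (m + 1) (Nat.succ_le_succ (Nat.zero_le i))
      (Nat.succ_le_succ him) le_rfl
  have haS' : ∀ k, a (k + 1) ≤ ‖z k i - xs‖ ^ 2 :=
    fun k => le_trans (haS k) (hkey k i hi).1
  have hSi : Tendsto (fun k => ‖z k i - xs‖ ^ 2) atTop (nhds (⨅ k, a k)) :=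
    tendsto_of_tendsto_of_tendsto_of_le_of_le hL' hL haS' hSa
  have hSi1 : Tendsto (fun k => ‖z k (i + 1) - xs‖ ^ 2) atTop (nhds (⨅ k, a k)) :=
    tendsto_of_tendsto_of_tendsto_of_le_of_le hL' hL haS hS1a
  have hdiff : Tendsto (fun k => ‖z k i - xs‖ ^ 2 - ‖z k (i + 1) - xs‖ ^ 2)
      atTop (nhds 0) := by
    simpa using hSi.sub hSi1
  -- squeeze the squared gap
  have hgap2 : ∀ k, ⟪A i (xbar k i) + ubar k i, z k i - xbar k i⟫ ^ 2 ≤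
      (C3 + R) ^ 2 * (‖z k i - xs‖ ^ 2 - ‖z k (i + 1) - xs‖ ^ 2) := by
    intro k
    have hd0 : 0 ≤ ‖z k i - xs‖ ^ 2 - ‖z k (i + 1) - xs‖ ^ 2 :=
      sub_nonneg.mpr (hkey k i hi).1
    exact le_trans (hkey k i hi).2
      (mul_le_mul_of_nonneg_right (pow_le_pow_left₀ (norm_nonneg _) (hvM k) 2) hd0)
  have hup : Tendsto (fun k => (C3 + R) ^ 2 *
      (‖z k i - xs‖ ^ 2 - ‖z k (i + 1) - xs‖ ^ 2)) atTop (nhds 0) := by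
    simpa using hdiff.const_mul ((C3 + R) ^ 2)
  have hsq0 : Tendsto (fun k => ⟪A i (xbar k i) + ubar k i, z k i - xbar k i⟫ ^ 2)
      atTop (nhds 0) :=
    tendsto_of_tendsto_of_tendsto_of_le_of_le tendsto_const_nhds hup
      (fun k => sq_nonneg _) hgap2
  have hc : Tendsto Real.sqrt (nhds 0) (nhds 0) := by
    simpa using Real.continuous_sqrt.tendsto 0
  have hfin := hc.comp hsq0
  simp only [Function.comp_def] at hfin
  have heq : (fun k => Real.sqrt (⟪A i (xbar k i) + ubar k i, z k i - xbar k i⟫ ^ 2))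
      = fun k => ⟪A i (xbar k i) + ubar k i, z k i - xbar k i⟫ :=
    funext fun k => Real.sqrt_sq (hgap0 k i hi)
  rwa [heq] at hfin
end

section
/- In the setting of the algorithm described in the context, for every i ∈ {1,…,m}, lim_{k→∞} ‖z_{i+1}^k − z_i^k‖ = 0; consequently lim_{k→∞} ‖x^{k+1} − x^k‖ = 0, and the sequences (x^k)_{k∈ℕ} and (z_i^k)_{k∈ℕ} (for each i) have the same cluster points. -/
open scoped RealInnerProductSpace
open Filter

lemma proj_key {n : ℕ} {C : Set (EuclideanSpace ℝ (Fin n))} (hC : Convex ℝ C)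
    {zz pp w : EuclideanSpace ℝ (Fin n)} (hpC : pp ∈ C) (hw : w ∈ C)
    (hmin : ∀ y ∈ C, ‖pp - zz‖ ≤ ‖y - zz‖) :
    ‖pp - w‖ ^ 2 + ‖pp - zz‖ ^ 2 ≤ ‖zz - w‖ ^ 2 := by
  have hbdd : BddBelow (Set.range fun w : C => ‖zz - (w : EuclideanSpace ℝ (Fin n))‖) := by
    refine ⟨0, ?_⟩
    rintro _ ⟨i, rfl⟩
    exact norm_nonneg _
  haveI : Nonempty C := ⟨⟨pp, hpC⟩⟩
  have hInf : ‖zz - pp‖ = ⨅ w : C, ‖zz - (w : EuclideanSpace ℝ (Fin n))‖ := by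
    refine le_antisymm (le_ciInf fun y => ?_) (ciInf_le hbdd ⟨pp, hpC⟩)
    rw [norm_sub_rev zz pp, norm_sub_rev zz (y : EuclideanSpace ℝ (Fin n))]
    exact hmin y y.2
  have hinner : ⟪zz - pp, w - pp⟫ ≤ 0 :=
    (norm_eq_iInf_iff_real_inner_le_zero hC hpC).mp hInf w hw
  have hexp : ‖zz - w‖ ^ 2 = ‖zz - pp‖ ^ 2 - 2 * ⟪zz - pp, w - pp⟫ + ‖w - pp‖ ^ 2 := by
    have h1 : zz - w = (zz - pp) - (w - pp) := by abel
    rw [h1, norm_sub_sq_real]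
  have h2 : ‖w - pp‖ = ‖pp - w‖ := norm_sub_rev _ _
  have h3 : ‖zz - pp‖ = ‖pp - zz‖ := norm_sub_rev _ _
  rw [h2, h3] at hexp
  linarith

lemma cluster_congr {n : ℕ} {u v : ℕ → EuclideanSpace ℝ (Fin n)}
    {q : EuclideanSpace ℝ (Fin n)}
    (hd : Tendsto (fun k => v k - u k) atTop (nhds 0))
    (hu : MapClusterPt q atTop u) : MapClusterPt q atTop v := by
  rw [mapClusterPt_iff_frequently] at hu ⊢
  intro s hs
  obtain ⟨ε, hε, hball⟩ := Metric.mem_nhds_iff.mp hs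
  have hev : ∀ᶠ k in atTop, ‖v k - u k‖ < ε / 2 :=
    (NormedAddCommGroup.tendsto_nhds_zero.mp hd) (ε / 2) (by positivity)
  have hfreq := hu (Metric.ball q (ε / 2)) (Metric.ball_mem_nhds q (by positivity))
  refine (hfreq.and_eventually hev).mono ?_
  rintro k ⟨h1, h2⟩
  apply hball
  rw [Metric.mem_ball] at h1 ⊢
  have : dist (v k) q ≤ dist (v k) (u k) + dist (u k) q := dist_triangle _ _ _
  simp only [dist_eq_norm] at this h1 ⊢
  linarith

lemma telescope_sum {n : ℕ} (f : ℕ → EuclideanSpace ℝ (Fin n)) (N : ℕ) :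
    ∑ i ∈ Finset.Icc 1 N, (f (i + 1) - f i) = f (N + 1) - f 1 := by
  induction N with
  | zero => simp
  | succ N ih =>
    rw [Finset.sum_Icc_succ_top (by omega), ih]
    abel

theorem algorithm_successive_iterates_to_zero {n m : ℕ} (hm : 1 ≤ m)
    (A : ℕ → EuclideanSpace ℝ (Fin n) → EuclideanSpace ℝ (Fin n))
    (B : ℕ → EuclideanSpace ℝ (Fin n) → Set (EuclideanSpace ℝ (Fin n)))
    (hA_cont : ∀ i ∈ Finset.Icc 1 m, Continuous (A i))
    (hA_mono : ∀ i ∈ Finset.Icc 1 m, ∀ x y, ⟪A i x - A i y, x - y⟫ ≥ 0)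
    (hB_max : ∀ i ∈ Finset.Icc 1 m, IsMaximalMonotoneOp (B i))
    (Sstar : Set (EuclideanSpace ℝ (Fin n)))
    (hSstar : Sstar = ⋂ i ∈ Finset.Icc 1 m, {x | -A i x ∈ B i x})
    (X : Set (EuclideanSpace ℝ (Fin n)))
    (hXne : X.Nonempty) (hXcl : IsClosed X) (hXcv : Convex ℝ X)
    (hXdom : ∀ i ∈ Finset.Icc 1 m, ∀ x ∈ X, (B i x).Nonempty)
    (hSX : (Sstar ∩ X).Nonempty)
    (θ δ : ℝ) (hθ : θ ∈ Set.Ioo (0 : ℝ) 1) (hδ : δ ∈ Set.Ioo (0 : ℝ) 1)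
    (βlo βhi : ℝ) (hβlo : 0 < βlo) (hβle : βlo ≤ βhi)
    (β : ℕ → ℝ) (hβ : ∀ k, β k ∈ Set.Icc βlo βhi)
    (R : ℝ) (hR : 0 < R)
    (x : ℕ → EuclideanSpace ℝ (Fin n))
    (z J xbar ubar : ℕ → ℕ → EuclideanSpace ℝ (Fin n))
    (α : ℕ → ℕ → ℝ)
    (p : ℕ → ℕ → EuclideanSpace ℝ (Fin n))
    (PX : EuclideanSpace ℝ (Fin n) → EuclideanSpace ℝ (Fin n))
    (hPX : ∀ w, PX w ∈ X ∧ ∀ y ∈ X, ‖PX w - w‖ ≤ ‖y - w‖)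
    (hxX : ∀ k, x k ∈ X)
    (hzX : ∀ k, ∀ i ∈ Finset.Icc 1 (m + 1), z k i ∈ X)
    (hz1 : ∀ k, z k 1 = x k)
    (hxk1 : ∀ k, x (k + 1) = z k (m + 1))
    (hα : ∀ k, ∀ i ∈ Finset.Icc 1 m, α k i ∈ Set.Ioc (0 : ℝ) 1)
    (hJ : ∀ k, ∀ i ∈ Finset.Icc 1 m,
      (β k)⁻¹ • (z k i - β k • A i (z k i) - J k i) ∈ B i (J k i))
    (hstop : ∀ k, ∀ i ∈ Finset.Icc 1 m, z k i = J k i →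
      z k (i + 1) = z k i ∧ xbar k i = z k i ∧
        ubar k i ∈ B i (z k i) ∧ ‖ubar k i‖ ≤ R)
    (hsearch : ∀ k, ∀ i ∈ Finset.Icc 1 m, z k i ≠ J k i →
      ∃ j : ℕ, α k i = θ ^ j ∧
        xbar k i = α k i • J k i + (1 - α k i) • z k i ∧
        ubar k i ∈ B i (xbar k i) ∧ ‖ubar k i‖ ≤ R ∧
        ⟪A i (xbar k i) + ubar k i, z k i - J k i⟫ ≥
          (δ / β k) * ‖z k i - J k i‖ ^ 2 ∧
        ∀ j' < j, ∀ u ∈ B i (θ ^ j' • J k i + (1 - θ ^ j') • z k i), ‖u‖ ≤ R →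
          ⟪A i (θ ^ j' • J k i + (1 - θ ^ j') • z k i) + u, z k i - J k i⟫ <
            (δ / β k) * ‖z k i - J k i‖ ^ 2)
    (hBne : ∀ k, ∀ i ∈ Finset.Icc 1 m, ∀ j : ℕ,
      ∃ u ∈ B i (θ ^ j • J k i + (1 - θ ^ j) • z k i), ‖u‖ ≤ R)
    (hp : ∀ k, ∀ i ∈ Finset.Icc 1 m,
      p k i ∈ {y : EuclideanSpace ℝ (Fin n) |
          ⟪A i (xbar k i) + ubar k i, y - xbar k i⟫ ≤ 0} ∧
        ∀ y ∈ {y : EuclideanSpace ℝ (Fin n) |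
            ⟪A i (xbar k i) + ubar k i, y - xbar k i⟫ ≤ 0},
          ‖p k i - z k i‖ ≤ ‖y - z k i‖)
    (hznext : ∀ k, ∀ i ∈ Finset.Icc 1 m, z k (i + 1) = PX (p k i)) :
    (∀ i ∈ Finset.Icc 1 m,
        Tendsto (fun k => ‖z k (i + 1) - z k i‖) atTop (nhds (0 : ℝ))) ∧
      Tendsto (fun k => ‖x (k + 1) - x k‖) atTop (nhds (0 : ℝ)) ∧
      (∀ i ∈ Finset.Icc 1 m, ∀ q : EuclideanSpace ℝ (Fin n),
        MapClusterPt q atTop x ↔ MapClusterPt q atTop (fun k => z k i)) := by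
  obtain ⟨w, hwS, hwX⟩ := hSX
  have hwSi : ∀ i ∈ Finset.Icc 1 m, -A i w ∈ B i w := by
    intro i hi
    rw [hSstar] at hwS
    exact Set.mem_iInter₂.mp hwS i hi
  have hub : ∀ k, ∀ i ∈ Finset.Icc 1 m, ubar k i ∈ B i (xbar k i) := by
    intro k i hi
    by_cases h : z k i = J k i
    · obtain ⟨_, hx, hu, _⟩ := hstop k i hi h
      rw [hx]; exact hu
    · obtain ⟨j, _, _, hu, _⟩ := hsearch k i hi h
      exact hu
  have hHconv : ∀ k i, Convex ℝ {y : EuclideanSpace ℝ (Fin n) |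
      ⟪A i (xbar k i) + ubar k i, y - xbar k i⟫ ≤ 0} := by
    intro k i
    have hset : {y : EuclideanSpace ℝ (Fin n) | ⟪A i (xbar k i) + ubar k i, y - xbar k i⟫ ≤ 0}
        = {y : EuclideanSpace ℝ (Fin n) | ⟪A i (xbar k i) + ubar k i, y⟫
            ≤ ⟪A i (xbar k i) + ubar k i, xbar k i⟫} := by
      ext y
      simp only [Set.mem_setOf_eq, inner_sub_right, sub_nonpos]
    rw [hset]
    exact convex_halfSpace_le
      ⟨fun a b => inner_add_right _ _ _, fun c a => real_inner_smul_right _ a c⟩ _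
  have hwH : ∀ k, ∀ i ∈ Finset.Icc 1 m,
      ⟪A i (xbar k i) + ubar k i, w - xbar k i⟫ ≤ 0 := by
    intro k i hi
    have m1 : ⟪xbar k i - w, ubar k i - (-A i w)⟫ ≥ 0 :=
      (hB_max i hi).1 (xbar k i) w (ubar k i) (-A i w) (hub k i hi) (hwSi i hi)
    have m2 : ⟪A i (xbar k i) - A i w, xbar k i - w⟫ ≥ 0 := hA_mono i hi (xbar k i) w
    have e0 : A i (xbar k i) + ubar k i
        = (A i (xbar k i) - A i w) + (ubar k i - (-A i w)) := by abel
    have e1 : ⟪A i (xbar k i) + ubar k i, xbar k i - w⟫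
        = ⟪A i (xbar k i) - A i w, xbar k i - w⟫
          + ⟪ubar k i - (-A i w), xbar k i - w⟫ := by
      rw [e0, inner_add_left]
    have e2 : ⟪ubar k i - (-A i w), xbar k i - w⟫
        = ⟪xbar k i - w, ubar k i - (-A i w)⟫ := real_inner_comm _ _
    have e3 : ⟪A i (xbar k i) + ubar k i, w - xbar k i⟫
        = -⟪A i (xbar k i) + ubar k i, xbar k i - w⟫ := by
      rw [show w - xbar k i = -(xbar k i - w) by abel, inner_neg_right]
    linarith
  have key : ∀ k, ∀ i ∈ Finset.Icc 1 m,
      ‖z k (i + 1) - w‖ ^ 2 + 2⁻¹ * ‖z k (i + 1) - z k i‖ ^ 2 ≤ ‖z k i - w‖ ^ 2 := by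
    intro k i hi
    have h1 : ‖p k i - w‖ ^ 2 + ‖p k i - z k i‖ ^ 2 ≤ ‖z k i - w‖ ^ 2 :=
      proj_key (hHconv k i) (hp k i hi).1 (hwH k i hi) (hp k i hi).2
    have h2 : ‖z k (i + 1) - w‖ ^ 2 + ‖z k (i + 1) - p k i‖ ^ 2 ≤ ‖p k i - w‖ ^ 2 := by
      rw [hznext k i hi]
      exact proj_key hXcv (hPX (p k i)).1 hwX fun y hy => (hPX (p k i)).2 y hy
    have h3 : ‖z k (i + 1) - z k i‖ ≤ ‖z k (i + 1) - p k i‖ + ‖p k i - z k i‖ := by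
      rw [show z k (i + 1) - z k i = (z k (i + 1) - p k i) + (p k i - z k i) by abel]
      exact norm_add_le _ _
    have h4 : ‖z k (i + 1) - z k i‖ ^ 2
        ≤ (‖z k (i + 1) - p k i‖ + ‖p k i - z k i‖) ^ 2 :=
      pow_le_pow_left₀ (norm_nonneg _) h3 2
    nlinarith [sq_nonneg (‖z k (i + 1) - p k i‖ - ‖p k i - z k i‖)]
  have gstep : ∀ k, ∀ i ∈ Finset.Icc 1 m,
      ‖z k (i + 1) - w‖ ^ 2 ≤ ‖z k i - w‖ ^ 2 := by
    intro k i hi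
    have := key k i hi
    nlinarith [sq_nonneg ‖z k (i + 1) - z k i‖]
  have hmono : ∀ k a b, 1 ≤ a → a ≤ b → b ≤ m + 1 →
      ‖z k b - w‖ ^ 2 ≤ ‖z k a - w‖ ^ 2 := by
    intro k a b h1a hab
    induction b, hab using Nat.le_induction with
    | base => exact fun _ => le_rfl
    | succ b hb ih =>
      intro hbm
      exact le_trans (gstep k b (Finset.mem_Icc.mpr ⟨h1a.trans hb, by omega⟩)) (ih (by omega))
  have hf_succ : ∀ k, ‖x (k + 1) - w‖ ^ 2 ≤ ‖x k - w‖ ^ 2 := by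
    intro k
    have := hmono k 1 (m + 1) le_rfl (by omega) le_rfl
    rw [hz1 k] at this
    rw [hxk1 k]
    exact this
  have hfanti : Antitone fun k => ‖x k - w‖ ^ 2 := antitone_nat_of_succ_le hf_succ
  have hfL : Tendsto (fun k => ‖x k - w‖ ^ 2) atTop (nhds (⨅ k, ‖x k - w‖ ^ 2)) :=
    tendsto_atTop_ciInf hfanti ⟨0, by rintro _ ⟨k, rfl⟩; positivity⟩
  have hdiff : Tendsto (fun k => ‖x k - w‖ ^ 2 - ‖x (k + 1) - w‖ ^ 2) atTop (nhds 0) := by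
    have h := hfL.sub (hfL.comp (tendsto_add_atTop_nat 1))
    simp only [Function.comp, sub_self] at h
    exact h
  have hbound : ∀ i ∈ Finset.Icc 1 m, ∀ k,
      2⁻¹ * ‖z k (i + 1) - z k i‖ ^ 2 ≤ ‖x k - w‖ ^ 2 - ‖x (k + 1) - w‖ ^ 2 := by
    intro i hi k
    obtain ⟨h1i, him⟩ := Finset.mem_Icc.mp hi
    have hA1 : ‖z k i - w‖ ^ 2 ≤ ‖x k - w‖ ^ 2 := by
      rw [← hz1 k]
      exact hmono k 1 i le_rfl h1i (by omega)
    have hA2 : ‖x (k + 1) - w‖ ^ 2 ≤ ‖z k (i + 1) - w‖ ^ 2 := by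
      rw [hxk1 k]
      exact hmono k (i + 1) (m + 1) (by omega) (by omega) le_rfl
    have := key k i hi
    linarith
  have hnsq : ∀ i ∈ Finset.Icc 1 m,
      Tendsto (fun k => ‖z k (i + 1) - z k i‖ ^ 2) atTop (nhds 0) := by
    intro i hi
    refine squeeze_zero (g := fun k => 2 * (‖x k - w‖ ^ 2 - ‖x (k + 1) - w‖ ^ 2))
      (fun k => by positivity) (fun k => by have := hbound i hi k; linarith) ?_
    have := hdiff.const_mul 2
    simpa using this
  have hnorm : ∀ i ∈ Finset.Icc 1 m,
      Tendsto (fun k => ‖z k (i + 1) - z k i‖) atTop (nhds 0) := by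
    intro i hi
    have h := (Real.continuous_sqrt.tendsto 0).comp (hnsq i hi)
    simp only [Function.comp, Real.sqrt_zero] at h
    exact h.congr fun k => Real.sqrt_sq (norm_nonneg _)
  have hvec : ∀ i ∈ Finset.Icc 1 m,
      Tendsto (fun k => z k (i + 1) - z k i) atTop (nhds 0) :=
    fun i hi => tendsto_zero_iff_norm_tendsto_zero.mpr (hnorm i hi)
  have hxdiff : Tendsto (fun k => x (k + 1) - x k) atTop (nhds 0) := by
    have hsum : Tendsto (fun k => ∑ i ∈ Finset.Icc 1 m, (z k (i + 1) - z k i))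
        atTop (nhds 0) := by
      have := tendsto_finset_sum (Finset.Icc 1 m) fun i hi => hvec i hi
      simpa using this
    refine hsum.congr fun k => ?_
    rw [telescope_sum (fun i => z k i) m, ← hxk1 k, hz1 k]
  have hzx : ∀ i, 1 ≤ i → i ≤ m + 1 →
      Tendsto (fun k => z k i - x k) atTop (nhds 0) := by
    intro i
    induction i with
    | zero => intro h1 _; exact absurd h1 (by omega)
    | succ i ih =>
      intro h1 h2
      by_cases hi0 : i = 0
      · subst hi0
        exact tendsto_const_nhds.congr fun k => by rw [hz1 k, sub_self]
      · have hi1 : 1 ≤ i := by omega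
        have h := (hvec i (Finset.mem_Icc.mpr ⟨hi1, by omega⟩)).add (ih hi1 (by omega))
        rw [add_zero] at h
        exact h.congr fun k => sub_add_sub_cancel _ _ _
  refine ⟨hnorm, tendsto_zero_iff_norm_tendsto_zero.mp hxdiff, ?_⟩
  intro i hi q
  obtain ⟨h1i, him⟩ := Finset.mem_Icc.mp hi
  have hd := hzx i h1i (by omega)
  constructor
  · exact cluster_congr hd
  · intro h
    refine cluster_congr ?_ h
    have := hd.neg
    rw [neg_zero] at this
    exact this.congr fun k => by rw [neg_sub]
end

section
/- (Main convergence theorem.) In the setting of the algorithm described in the context, the sequence (x^k)_{k∈ℕ} converges to some point x̃ ∈ S* ∩ X; in particular x̃ satisfies −A_i(x̃) ∈ B_i(x̃) for every i ∈ {1,…,m}. -/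
open scoped RealInnerProductSpace
open Filter

section Aux
variable {F : Type*} [NormedAddCommGroup F] [InnerProductSpace ℝ F]

lemma halfspace_convex (v c : F) : Convex ℝ {y : F | ⟪v, y - c⟫ ≤ 0} := by
  intro y hy z hz a b ha hb hab
  simp only [Set.mem_setOf_eq] at *
  have hc : a • c + b • c = c := by rw [← add_smul, hab, one_smul]
  have h1 : a • y + b • z - c = a • (y - c) + b • (z - c) := by
    rw [smul_sub, smul_sub,
      show a • y - a • c + (b • z - b • c) = a • y + b • z - (a • c + b • c) by abel, hc]
  rw [h1, inner_add_right, inner_smul_right, inner_smul_right]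
  nlinarith

lemma proj_sq_le {K : Set F} (hK : Convex ℝ K) {q s w : F}
    (hq : q ∈ K) (hw : w ∈ K) (hmin : ∀ y ∈ K, ‖q - s‖ ≤ ‖y - s‖) :
    ‖q - w‖ ^ 2 + ‖q - s‖ ^ 2 ≤ ‖s - w‖ ^ 2 := by
  haveI : Nonempty K := ⟨⟨q, hq⟩⟩
  have heq : ‖s - q‖ = ⨅ y : K, ‖s - (y : F)‖ := by
    refine le_antisymm (le_ciInf fun y => ?_) ?_
    · rw [norm_sub_rev s q, norm_sub_rev s (y : F)]
      exact hmin y y.2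
    · have hbdd : BddBelow (Set.range fun y : K => ‖s - (y : F)‖) :=
        ⟨0, by rintro r ⟨y, rfl⟩; exact norm_nonneg _⟩
      exact ciInf_le hbdd ⟨q, hq⟩
  have h1 : ⟪s - q, w - q⟫ ≤ 0 :=
    (norm_eq_iInf_iff_real_inner_le_zero hK hq).mp heq w hw
  have e1 : ‖s - w‖ ^ 2 = ‖s - q‖ ^ 2 - 2 * ⟪s - q, w - q⟫ + ‖w - q‖ ^ 2 := by
    rw [show s - w = (s - q) - (w - q) by abel]
    rw [norm_sub_sq_real]
  have e2 : ‖q - w‖ = ‖w - q‖ := norm_sub_rev _ _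
  have e3 : ‖q - s‖ = ‖s - q‖ := norm_sub_rev _ _
  rw [e2, e3]
  nlinarith

lemma closed_graph_of_maximal {n : ℕ}
    {B : EuclideanSpace ℝ (Fin n) → Set (EuclideanSpace ℝ (Fin n))}
    (hB : IsMaximalMonotoneOp B) {yk uk : ℕ → EuclideanSpace ℝ (Fin n)}
    {y u : EuclideanSpace ℝ (Fin n)}
    (hy : Tendsto yk atTop (nhds y)) (hu : Tendsto uk atTop (nhds u))
    (hmem : ∀ᶠ k in atTop, uk k ∈ B (yk k)) : u ∈ B y := by
  refine hB.2 y u fun y' v hv => ?_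
  have hten : Tendsto (fun k => ⟪yk k - y', uk k - v⟫) atTop
      (nhds ⟪y - y', u - v⟫) :=
    Tendsto.inner (hy.sub tendsto_const_nhds) (hu.sub tendsto_const_nhds)
  exact ge_of_tendsto hten (hmem.mono fun k hk => hB.1 _ _ _ _ hk hv)

lemma sq_le_imp_le {a b : ℝ} (ha : 0 ≤ a) (hb : 0 ≤ b) (h : a ^ 2 ≤ b ^ 2) : a ≤ b := by
  nlinarith

end Aux

set_option maxHeartbeats 4000000 in
theorem algorithm_main_convergence {n m : ℕ} (hm : 1 ≤ m)
    (A : ℕ → EuclideanSpace ℝ (Fin n) → EuclideanSpace ℝ (Fin n))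
    (B : ℕ → EuclideanSpace ℝ (Fin n) → Set (EuclideanSpace ℝ (Fin n)))
    (hA_cont : ∀ i ∈ Finset.Icc 1 m, Continuous (A i))
    (hA_mono : ∀ i ∈ Finset.Icc 1 m, ∀ x y, ⟪A i x - A i y, x - y⟫ ≥ 0)
    (hB_max : ∀ i ∈ Finset.Icc 1 m, IsMaximalMonotoneOp (B i))
    (Sstar : Set (EuclideanSpace ℝ (Fin n)))
    (hSstar : Sstar = ⋂ i ∈ Finset.Icc 1 m, {x | -A i x ∈ B i x})
    (X : Set (EuclideanSpace ℝ (Fin n)))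
    (hXne : X.Nonempty) (hXcl : IsClosed X) (hXcv : Convex ℝ X)
    (hXdom : ∀ i ∈ Finset.Icc 1 m, ∀ x ∈ X, (B i x).Nonempty)
    (hSX : (Sstar ∩ X).Nonempty)
    (θ δ : ℝ) (hθ : θ ∈ Set.Ioo (0 : ℝ) 1) (hδ : δ ∈ Set.Ioo (0 : ℝ) 1)
    (βlo βhi : ℝ) (hβlo : 0 < βlo) (hβle : βlo ≤ βhi)
    (β : ℕ → ℝ) (hβ : ∀ k, β k ∈ Set.Icc βlo βhi)
    (R : ℝ) (hR : 0 < R)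
    (x : ℕ → EuclideanSpace ℝ (Fin n))
    (z J xbar ubar : ℕ → ℕ → EuclideanSpace ℝ (Fin n))
    (α : ℕ → ℕ → ℝ)
    (p : ℕ → ℕ → EuclideanSpace ℝ (Fin n))
    (PX : EuclideanSpace ℝ (Fin n) → EuclideanSpace ℝ (Fin n))
    (hPX : ∀ w, PX w ∈ X ∧ ∀ y ∈ X, ‖PX w - w‖ ≤ ‖y - w‖)
    (hxX : ∀ k, x k ∈ X)
    (hzX : ∀ k, ∀ i ∈ Finset.Icc 1 (m + 1), z k i ∈ X)
    (hz1 : ∀ k, z k 1 = x k)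
    (hxk1 : ∀ k, x (k + 1) = z k (m + 1))
    (hα : ∀ k, ∀ i ∈ Finset.Icc 1 m, α k i ∈ Set.Ioc (0 : ℝ) 1)
    (hJ : ∀ k, ∀ i ∈ Finset.Icc 1 m,
      (β k)⁻¹ • (z k i - β k • A i (z k i) - J k i) ∈ B i (J k i))
    (hstop : ∀ k, ∀ i ∈ Finset.Icc 1 m, z k i = J k i →
      z k (i + 1) = z k i ∧ xbar k i = z k i ∧
        ubar k i ∈ B i (z k i) ∧ ‖ubar k i‖ ≤ R)
    (hsearch : ∀ k, ∀ i ∈ Finset.Icc 1 m, z k i ≠ J k i →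
      ∃ j : ℕ, α k i = θ ^ j ∧
        xbar k i = α k i • J k i + (1 - α k i) • z k i ∧
        ubar k i ∈ B i (xbar k i) ∧ ‖ubar k i‖ ≤ R ∧
        ⟪A i (xbar k i) + ubar k i, z k i - J k i⟫ ≥
          (δ / β k) * ‖z k i - J k i‖ ^ 2 ∧
        ∀ j' < j, ∀ u ∈ B i (θ ^ j' • J k i + (1 - θ ^ j') • z k i), ‖u‖ ≤ R →
          ⟪A i (θ ^ j' • J k i + (1 - θ ^ j') • z k i) + u, z k i - J k i⟫ <
            (δ / β k) * ‖z k i - J k i‖ ^ 2)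
    (hBne : ∀ k, ∀ i ∈ Finset.Icc 1 m, ∀ j : ℕ,
      ∃ u ∈ B i (θ ^ j • J k i + (1 - θ ^ j) • z k i), ‖u‖ ≤ R)
    (hp : ∀ k, ∀ i ∈ Finset.Icc 1 m,
      p k i ∈ {y : EuclideanSpace ℝ (Fin n) |
          ⟪A i (xbar k i) + ubar k i, y - xbar k i⟫ ≤ 0} ∧
        ∀ y ∈ {y : EuclideanSpace ℝ (Fin n) |
            ⟪A i (xbar k i) + ubar k i, y - xbar k i⟫ ≤ 0},
          ‖p k i - z k i‖ ≤ ‖y - z k i‖)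
    (hznext : ∀ k, ∀ i ∈ Finset.Icc 1 m, z k (i + 1) = PX (p k i)) :
    ∃ xt ∈ Sstar ∩ X, Tendsto x atTop (nhds xt) ∧
      ∀ i ∈ Finset.Icc 1 m, -A i xt ∈ B i xt := by
  obtain ⟨w, hwS, hwX⟩ := hSX
  have hβpos : ∀ k, 0 < β k := fun k => lt_of_lt_of_le hβlo (hβ k).1
  have hβne : ∀ k, β k ≠ 0 := fun k => (hβpos k).ne'
  -- membership of points of Sstar
  have hSmem : ∀ w' ∈ Sstar, ∀ i ∈ Finset.Icc 1 m, -A i w' ∈ B i w' := by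
    intro w' hw' i hi
    rw [hSstar] at hw'
    exact Set.mem_iInter₂.mp hw' i hi
  -- ubar is always in B i (xbar k i) with norm ≤ R
  have hub : ∀ k, ∀ i ∈ Finset.Icc 1 m,
      ubar k i ∈ B i (xbar k i) ∧ ‖ubar k i‖ ≤ R := by
    intro k i hi
    by_cases h : z k i = J k i
    · obtain ⟨_, hx, hu, hn⟩ := hstop k i hi h
      rw [hx]; exact ⟨hu, hn⟩
    · obtain ⟨j, _, _, hu, hn, _, _⟩ := hsearch k i hi h
      exact ⟨hu, hn⟩
  -- every solution lies in every halfspace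
  have hhalf : ∀ w' ∈ Sstar, ∀ k, ∀ i ∈ Finset.Icc 1 m,
      ⟪A i (xbar k i) + ubar k i, w' - xbar k i⟫ ≤ 0 := by
    intro w' hw' k i hi
    have h1 : ⟪xbar k i - w', ubar k i - (-A i w')⟫ ≥ 0 :=
      (hB_max i hi).1 _ _ _ _ (hub k i hi).1 (hSmem w' hw' i hi)
    have h2 : ⟪A i (xbar k i) - A i w', xbar k i - w'⟫ ≥ 0 := hA_mono i hi _ _
    have h1' : ⟪ubar k i - (-A i w'), xbar k i - w'⟫ ≥ 0 := by
      rwa [real_inner_comm] at h1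
    have e1 : ⟪A i (xbar k i) + ubar k i, w' - xbar k i⟫ =
        -(⟪ubar k i - (-A i w'), xbar k i - w'⟫ +
          ⟪A i (xbar k i) - A i w', xbar k i - w'⟫) := by
      rw [show w' - xbar k i = -(xbar k i - w') by abel, inner_neg_right,
        inner_add_left, inner_sub_left, inner_sub_left, inner_neg_left]
      ring
    linarith
  -- one-step Fejér inequality
  have step : ∀ w' ∈ Sstar ∩ X, ∀ k, ∀ i ∈ Finset.Icc 1 m,
      ‖z k (i+1) - w'‖ ^ 2 + (‖z k (i+1) - p k i‖ ^ 2 + ‖p k i - z k i‖ ^ 2)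
        ≤ ‖z k i - w'‖ ^ 2 := by
    rintro w' ⟨hw'S, hw'X⟩ k i hi
    have hH : ⟪A i (xbar k i) + ubar k i, w' - xbar k i⟫ ≤ 0 :=
      hhalf w' hw'S k i hi
    have step1 : ‖p k i - w'‖ ^ 2 + ‖p k i - z k i‖ ^ 2 ≤ ‖z k i - w'‖ ^ 2 :=
      proj_sq_le (halfspace_convex _ _) (hp k i hi).1 hH (hp k i hi).2
    have step2 : ‖z k (i+1) - w'‖ ^ 2 + ‖z k (i+1) - p k i‖ ^ 2
        ≤ ‖p k i - w'‖ ^ 2 := by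
      rw [hznext k i hi]
      exact proj_sq_le hXcv (hPX (p k i)).1 hw'X (hPX (p k i)).2
    linarith
  -- monotone chain along inner iterations
  have chain : ∀ w' ∈ Sstar ∩ X, ∀ k, ∀ i j : ℕ, 1 ≤ i → i ≤ j → j ≤ m + 1 →
      ‖z k j - w'‖ ^ 2 ≤ ‖z k i - w'‖ ^ 2 := by
    intro w' hw' k i j h1 hij hj
    induction j with
    | zero => omega
    | succ j ih =>
      rcases Nat.lt_or_ge i (j+1) with hlt | hge
      · have hij' : i ≤ j := by omega
        have hj' : 1 ≤ j := by omega
        have hjm : j ≤ m := by omega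
        have := step w' hw' k j (Finset.mem_Icc.mpr ⟨hj', hjm⟩)
        have hih := ih hij' (by omega)
        nlinarith [sq_nonneg ‖z k (j+1) - p k j‖, sq_nonneg ‖p k j - z k j‖]
      · have : i = j + 1 := by omega
        rw [this]
  have hwSX : w ∈ Sstar ∩ X := ⟨hwS, hwX⟩
  -- the decrease of ‖x k - w'‖² for solutions w'
  have edec : ∀ w' ∈ Sstar ∩ X, ∀ k, ‖x (k+1) - w'‖ ^ 2 ≤ ‖x k - w'‖ ^ 2 := by
    intro w' hw' k
    have := chain w' hw' k 1 (m+1) le_rfl (by omega) le_rfl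
    rwa [hz1, ← hxk1] at this
  set e : ℕ → ℝ := fun k => ‖x k - w‖ ^ 2 with he
  have hanti : Antitone e := antitone_nat_of_succ_le fun k => edec w hwSX k
  have hbdd : BddBelow (Set.range e) := ⟨0, by rintro r ⟨k, rfl⟩; positivity⟩
  have htendE : Tendsto e atTop (nhds (⨅ k, e k)) := tendsto_atTop_ciInf hanti hbdd
  have hdiff : Tendsto (fun k => e k - e (k+1)) atTop (nhds 0) := by
    have := htendE.sub (htendE.comp (tendsto_add_atTop_nat 1))
    simpa using this
  -- per-step drops tend to zero
  have hdrop : ∀ i ∈ Finset.Icc 1 m, ∀ k,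
      ‖z k (i+1) - p k i‖ ^ 2 + ‖p k i - z k i‖ ^ 2 ≤ e k - e (k+1) := by
    intro i hi k
    obtain ⟨hi1, him⟩ := Finset.mem_Icc.mp hi
    have c1 : ‖z k (m+1) - w‖ ^ 2 ≤ ‖z k (i+1) - w‖ ^ 2 :=
      chain w hwSX k (i+1) (m+1) (by omega) (by omega) le_rfl
    have c2 : ‖z k i - w‖ ^ 2 ≤ ‖z k 1 - w‖ ^ 2 :=
      chain w hwSX k 1 i le_rfl (by omega) (by omega)
    have c3 := step w hwSX k i hi
    have e1 : e (k+1) = ‖z k (m+1) - w‖ ^ 2 := by rw [he]; simp [hxk1 k]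
    have e2 : e k = ‖z k 1 - w‖ ^ 2 := by rw [he]; simp [hz1 k]
    rw [e1, e2]
    linarith
  have hsq0 : ∀ f : ℕ → ℝ, (∀ k, 0 ≤ f k) →
      Tendsto (fun k => f k ^ 2) atTop (nhds 0) → Tendsto f atTop (nhds 0) := by
    intro f hf h
    have := h.sqrt
    rw [Real.sqrt_zero] at this
    refine this.congr fun k => ?_
    rw [Real.sqrt_sq (hf k)]
  have hpz : ∀ i ∈ Finset.Icc 1 m,
      Tendsto (fun k => ‖p k i - z k i‖) atTop (nhds 0) := by
    intro i hi
    refine hsq0 _ (fun k => norm_nonneg _) (squeeze_zero (fun k => by positivity)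
      (fun k => ?_) hdiff)
    have := hdrop i hi k
    nlinarith [sq_nonneg ‖z k (i+1) - p k i‖]
  have hz2p : ∀ i ∈ Finset.Icc 1 m,
      Tendsto (fun k => ‖z k (i+1) - p k i‖) atTop (nhds 0) := by
    intro i hi
    refine hsq0 _ (fun k => norm_nonneg _) (squeeze_zero (fun k => by positivity)
      (fun k => ?_) hdiff)
    have := hdrop i hi k
    nlinarith [sq_nonneg ‖p k i - z k i‖]
  have hzz : ∀ i ∈ Finset.Icc 1 m,
      Tendsto (fun k => ‖z k (i+1) - z k i‖) atTop (nhds 0) := by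
    intro i hi
    have h := (hz2p i hi).add (hpz i hi)
    rw [add_zero] at h
    refine squeeze_zero (fun k => norm_nonneg _) (fun k => ?_) h
    calc ‖z k (i+1) - z k i‖ = ‖(z k (i+1) - p k i) + (p k i - z k i)‖ := by
          congr 1; abel
      _ ≤ ‖z k (i+1) - p k i‖ + ‖p k i - z k i‖ := norm_add_le _ _
  -- boundedness
  set ρ : ℝ := ‖x 0 - w‖ with hρ
  have hρ0 : 0 ≤ ρ := norm_nonneg _
  have hzbnd : ∀ k, ∀ i : ℕ, 1 ≤ i → i ≤ m + 1 → ‖z k i - w‖ ≤ ρ := by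
    intro k i h1 h2
    refine sq_le_imp_le (norm_nonneg _) hρ0 ?_
    have c2 : ‖z k i - w‖ ^ 2 ≤ ‖z k 1 - w‖ ^ 2 := chain w hwSX k 1 i le_rfl h1 h2
    have c3 : e k ≤ e 0 := hanti (Nat.zero_le k)
    have e2 : e k = ‖z k 1 - w‖ ^ 2 := by rw [he]; simp [hz1 k]
    rw [← e2] at c2
    have : ‖z k i - w‖ ^ 2 ≤ e 0 := le_trans c2 c3
    simpa [he, hρ] using this
  have hxbnd : ∀ k, ‖x k - w‖ ≤ ρ := by
    intro k
    have := hzbnd k 1 le_rfl (by omega)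
    rwa [hz1] at this
  -- bound on A on balls
  have hAbnd : ∀ i ∈ Finset.Icc 1 m, ∀ r : ℝ, ∃ M : ℝ, 0 ≤ M ∧
      ∀ y : EuclideanSpace ℝ (Fin n), ‖y - w‖ ≤ r → ‖A i y‖ ≤ M := by
    intro i hi r
    obtain ⟨C, hC⟩ := (isCompact_closedBall w r).exists_bound_of_continuousOn
      (hA_cont i hi).continuousOn
    refine ⟨max C 0, le_max_right _ _, fun y hy => ?_⟩
    refine le_trans (hC y ?_) (le_max_left _ _)
    rwa [Metric.mem_closedBall, dist_eq_norm]
  -- bound on J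
  have hJbnd : ∀ i ∈ Finset.Icc 1 m, ∀ k,
      ‖J k i - w‖ ≤ ‖z k i - w‖ + βhi * (‖A i (z k i)‖ + ‖A i w‖) := by
    intro i hi k
    have hmono := (hB_max i hi).1 _ _ _ _ (hJ k i hi) (hSmem w hwS i hi)
    have huJeq : (β k)⁻¹ • (z k i - β k • A i (z k i) - J k i) =
        (β k)⁻¹ • (z k i - J k i) - A i (z k i) := by
      rw [show z k i - β k • A i (z k i) - J k i
          = (z k i - J k i) - β k • A i (z k i) by abel, smul_sub, smul_smul,
        inv_mul_cancel₀ (hβne k), one_smul]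
    rw [huJeq] at hmono
    have hexp : ⟪J k i - w, ((β k)⁻¹ • (z k i - J k i) - A i (z k i)) - (-A i w)⟫
        = (β k)⁻¹ * ⟪J k i - w, z k i - J k i⟫ + ⟪J k i - w, A i w - A i (z k i)⟫ := by
      rw [show ((β k)⁻¹ • (z k i - J k i) - A i (z k i)) - (-A i w)
          = (β k)⁻¹ • (z k i - J k i) + (A i w - A i (z k i)) by abel,
        inner_add_right, inner_smul_right]
    rw [hexp] at hmono
    have hinner1 : ⟪J k i - w, z k i - J k i⟫
        = ⟪J k i - w, z k i - w⟫ - ‖J k i - w‖ ^ 2 := by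
      rw [show z k i - J k i = (z k i - w) - (J k i - w) by abel, inner_sub_right,
        real_inner_self_eq_norm_sq]
    rw [hinner1] at hmono
    have cs1 : ⟪J k i - w, z k i - w⟫ ≤ ‖J k i - w‖ * ‖z k i - w‖ :=
      real_inner_le_norm _ _
    have cs2 : ⟪J k i - w, A i w - A i (z k i)⟫
        ≤ ‖J k i - w‖ * (‖A i (z k i)‖ + ‖A i w‖) := by
      refine le_trans (real_inner_le_norm _ _) ?_
      refine mul_le_mul_of_nonneg_left ?_ (norm_nonneg _)
      refine le_trans (norm_sub_le _ _) ?_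
      rw [add_comm]
    have hb2 : β k ≤ βhi := (hβ k).2
    have hβk := hβpos k
    -- abstract the inner products and norms into real scalars
    have ht0 : 0 ≤ ‖J k i - w‖ := norm_nonneg _
    have hs0 : 0 ≤ ‖z k i - w‖ := norm_nonneg _
    have ha0 : 0 ≤ ‖A i (z k i)‖ + ‖A i w‖ := by positivity
    have hβhi0 : (0:ℝ) ≤ βhi := le_trans hβlo.le hβle
    generalize hPv : (⟪J k i - w, z k i - w⟫ : ℝ) = P at hmono cs1
    generalize hQv : (⟪J k i - w, A i w - A i (z k i)⟫ : ℝ) = Q at hmono cs2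
    generalize htv : ‖J k i - w‖ = t at hmono cs1 cs2 ht0 ⊢
    generalize hsv : ‖z k i - w‖ = s at cs1 hs0 ⊢
    generalize hav : ‖A i (z k i)‖ + ‖A i w‖ = a at cs2 ha0 ⊢
    have h3 : 0 ≤ (P - t ^ 2) + β k * Q := by
      have h4 := mul_le_mul_of_nonneg_left hmono (le_of_lt hβk)
      rw [mul_zero] at h4
      have hfield : β k * ((β k)⁻¹ * (P - t ^ 2) + Q)
          = (P - t ^ 2) + β k * Q := by
        field_simp
      linarith [h4, hfield]
    have key2 : t ^ 2 ≤ t * (s + βhi * a) := by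
      nlinarith [mul_le_mul_of_nonneg_right hb2 (mul_nonneg ht0 ha0),
        mul_le_mul_of_nonneg_left cs2 (le_of_lt hβk)]
    rcases eq_or_lt_of_le ht0 with h0 | h0
    · have hpos : (0:ℝ) ≤ s + βhi * a := add_nonneg hs0 (mul_nonneg hβhi0 ha0)
      linarith
    · have h5 : t * t ≤ t * (s + βhi * a) := by nlinarith [key2]
      exact le_of_mul_le_mul_left h5 h0
  have hθ0 := hθ.1
  have hθ1 := hθ.2
  have hθne : θ ≠ 0 := ne_of_gt hθ0
  have hδ0 := hδ.1
  have hβhi0 : (0:ℝ) ≤ βhi := le_trans hβlo.le hβle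
  -- the key vanishing of z - J
  have hzJ : ∀ i ∈ Finset.Icc 1 m,
      Tendsto (fun k => ‖z k i - J k i‖) atTop (nhds 0) := by
    intro i hi
    obtain ⟨hi1, him⟩ := Finset.mem_Icc.mp hi
    obtain ⟨M1, hM10, hM1⟩ := hAbnd i hi ρ
    set ρJ : ℝ := ρ + βhi * (M1 + ‖A i w‖) with hρJ
    have hρJρ : ρ ≤ ρJ := by
      have : (0:ℝ) ≤ βhi * (M1 + ‖A i w‖) :=
        mul_nonneg hβhi0 (add_nonneg hM10 (norm_nonneg _))
      linarith
    have hρJ0 : 0 ≤ ρJ := le_trans hρ0 hρJρ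
    have hJb : ∀ k, ‖J k i - w‖ ≤ ρJ := by
      intro k
      refine le_trans (hJbnd i hi k) ?_
      have h1 := hzbnd k i hi1 (by omega)
      have h2 := hM1 (z k i) (hzbnd k i hi1 (by omega))
      have : ‖A i (z k i)‖ + ‖A i w‖ ≤ M1 + ‖A i w‖ := by linarith
      have := mul_le_mul_of_nonneg_left this hβhi0
      rw [hρJ]; linarith
    obtain ⟨M2, hM20, hM2⟩ := hAbnd i hi ρJ
    set C : ℝ := M2 + R with hC
    have hC0 : 0 ≤ C := by positivity
    -- xbar is bounded
    have hxbb : ∀ k, ‖xbar k i - w‖ ≤ ρJ := by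
      intro k
      by_cases hzJeq : z k i = J k i
      · rw [(hstop k i hi hzJeq).2.1]
        exact le_trans (hzbnd k i hi1 (by omega)) hρJρ
      · obtain ⟨j, hαj, hxb, _, _, _, _⟩ := hsearch k i hi hzJeq
        have hα1 := hα k i hi
        have hxbw : xbar k i - w
            = α k i • (J k i - w) + (1 - α k i) • (z k i - w) := by
          rw [hxb]; module
        rw [hxbw]
        refine le_trans (norm_add_le _ _) ?_
        rw [norm_smul, norm_smul, Real.norm_eq_abs, Real.norm_eq_abs,
          abs_of_pos hα1.1, abs_of_nonneg (by linarith [hα1.2] : (0:ℝ) ≤ 1 - α k i)]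
        have h1 := hJb k
        have h2 := hzbnd k i hi1 (by omega)
        have h3 : 0 ≤ ‖J k i - w‖ := norm_nonneg _
        have h4 : 0 ≤ ‖z k i - w‖ := norm_nonneg _
        nlinarith [hα1.1.le, hα1.2, hρJρ]
    -- the linesearch quantity tends to zero
    have claim1 : ∀ k, α k i * ‖z k i - J k i‖ ^ 2
        ≤ βhi * C / δ * ‖p k i - z k i‖ := by
      intro k
      by_cases hzJeq : z k i = J k i
      · have hrhs : 0 ≤ βhi * C / δ * ‖p k i - z k i‖ :=
          mul_nonneg (div_nonneg (mul_nonneg hβhi0 hC0) hδ0.le) (norm_nonneg _)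
        have hz0 : ‖z k i - J k i‖ = 0 := by rw [hzJeq, sub_self, norm_zero]
        rw [hz0]
        simpa using hrhs
      · obtain ⟨j, hαj, hxb, hubm, hubn, hls, hfail⟩ := hsearch k i hi hzJeq
        have hα1 := hα k i hi
        have hβk := hβpos k
        have hb2 : β k ≤ βhi := (hβ k).2
        have hvC : ‖A i (xbar k i) + ubar k i‖ ≤ C := by
          refine le_trans (norm_add_le _ _) ?_
          rw [hC]
          exact add_le_add (hM2 _ (hxbb k)) hubn
        have hzx : z k i - xbar k i = α k i • (z k i - J k i) := by
          rw [hxb]; module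
        have h1 : α k i * ((δ / β k) * ‖z k i - J k i‖ ^ 2)
            ≤ ⟪A i (xbar k i) + ubar k i, z k i - p k i⟫ := by
          have e1 : ⟪A i (xbar k i) + ubar k i, z k i - p k i⟫
              = ⟪A i (xbar k i) + ubar k i, z k i - xbar k i⟫
                - ⟪A i (xbar k i) + ubar k i, p k i - xbar k i⟫ := by
            rw [show z k i - p k i = (z k i - xbar k i) - (p k i - xbar k i) by abel,
              inner_sub_right]
          have e2 : ⟪A i (xbar k i) + ubar k i, z k i - xbar k i⟫
              = α k i * ⟪A i (xbar k i) + ubar k i, z k i - J k i⟫ := by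
            rw [hzx, inner_smul_right]
          have h2 := (hp k i hi).1
          have h3 := mul_le_mul_of_nonneg_left hls (le_of_lt hα1.1)
          rw [e1, e2]
          simp only [Set.mem_setOf_eq] at h2
          linarith
        have h2 : ⟪A i (xbar k i) + ubar k i, z k i - p k i⟫
            ≤ C * ‖p k i - z k i‖ := by
          refine le_trans (real_inner_le_norm _ _) ?_
          rw [norm_sub_rev (z k i) (p k i)]
          exact mul_le_mul_of_nonneg_right hvC (norm_nonneg _)
        have hcomb : α k i * ((δ / β k) * ‖z k i - J k i‖ ^ 2)
            ≤ C * ‖p k i - z k i‖ := le_trans h1 h2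
        have hQ0 : 0 ≤ ‖z k i - J k i‖ ^ 2 := sq_nonneg _
        have hP0 : 0 ≤ ‖p k i - z k i‖ := norm_nonneg _
        generalize hQv : (‖z k i - J k i‖ : ℝ) ^ 2 = Q at hcomb hQ0 ⊢
        generalize hPv : (‖p k i - z k i‖ : ℝ) = P at hcomb hP0 ⊢
        have h3 := mul_le_mul_of_nonneg_left hcomb (le_of_lt (div_pos hβk hδ0))
        have h4 : (β k / δ) * (α k i * ((δ / β k) * Q)) = α k i * Q := by
          field_simp
        have h5 : (β k / δ) * (C * P) ≤ (βhi / δ) * (C * P) := by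
          refine mul_le_mul_of_nonneg_right ?_ (mul_nonneg hC0 hP0)
          exact (div_le_div_iff_of_pos_right hδ0).mpr hb2
        have h6 : (βhi / δ) * (C * P) = βhi * C / δ * P := by ring
        linarith
    have claim2 : Tendsto (fun k => α k i * ‖z k i - J k i‖ ^ 2) atTop (nhds 0) := by
      have hg : Tendsto (fun k => βhi * C / δ * ‖p k i - z k i‖) atTop (nhds 0) := by
        have := (hpz i hi).const_mul (βhi * C / δ)
        simpa using this
      exact squeeze_zero
        (fun k => mul_nonneg (hα k i hi).1.le (sq_nonneg _)) claim1 hg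
    -- suppose not; extract a bad subsequence
    by_contra hcon
    rw [Metric.tendsto_atTop] at hcon
    push_neg at hcon
    obtain ⟨ε, hε, hfreq⟩ := hcon
    have hfreq' : ∃ᶠ k in atTop, ε ≤ ‖z k i - J k i‖ := by
      rw [frequently_atTop]
      intro N
      obtain ⟨k, hk1, hk2⟩ := hfreq N
      exact ⟨k, hk1, by
        rwa [Real.dist_eq, sub_zero, abs_of_nonneg (norm_nonneg _)] at hk2⟩
    obtain ⟨φ, hφmono, hφ⟩ := Filter.extraction_of_frequently_atTop hfreq'
    have hne : ∀ l, z (φ l) i ≠ J (φ l) i := by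
      intro l h
      have h2 := hφ l
      rw [h, sub_self, norm_zero] at h2
      linarith
    choose jj hαj hxbj hubj hubnj hlsj hfailj using fun l => hsearch (φ l) i hi (hne l)
    choose u huB huR using fun l => hBne (φ l) i hi (jj l - 1)
    have hαtend : Tendsto (fun l => α (φ l) i) atTop (nhds 0) := by
      have h1 : Tendsto (fun l => α (φ l) i * ‖z (φ l) i - J (φ l) i‖ ^ 2)
          atTop (nhds 0) := claim2.comp hφmono.tendsto_atTop
      have h2 : Tendsto (fun l => ε⁻¹ ^ 2 * (α (φ l) i * ‖z (φ l) i - J (φ l) i‖ ^ 2))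
          atTop (nhds 0) := by
        have := h1.const_mul (ε⁻¹ ^ 2)
        simpa using this
      refine squeeze_zero (fun l => (hα (φ l) i hi).1.le) (fun l => ?_) h2
      have h3 := hφ l
      have hα1 := hα (φ l) i hi
      have h4 : ε ^ 2 ≤ ‖z (φ l) i - J (φ l) i‖ ^ 2 := by nlinarith [norm_nonneg (z (φ l) i - J (φ l) i)]
      have h6 : α (φ l) i * ε ^ 2 ≤ α (φ l) i * ‖z (φ l) i - J (φ l) i‖ ^ 2 :=
        mul_le_mul_of_nonneg_left h4 hα1.1.le
      have h7 : (0:ℝ) ≤ ε⁻¹ ^ 2 := by positivity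
      have h8 : α (φ l) i * ε ^ 2 * ε⁻¹ ^ 2 = α (φ l) i := by
        field_simp
      have h9 := mul_le_mul_of_nonneg_right h6 h7
      nlinarith [h8, h9]
    -- eventually the linesearch index is ≥ 1
    have hjj1 : ∀ᶠ l in atTop, 1 ≤ jj l := by
      have hev : ∀ᶠ l in atTop, α (φ l) i < 1 :=
        hαtend.eventually (gt_mem_nhds (by linarith : (0:ℝ) < 1))
      filter_upwards [hev] with l hl
      by_contra h
      push_neg at h
      have hjl : jj l = 0 := by omega
      rw [hαj l, hjl, pow_zero] at hl
      linarith
    -- the previous trial stepsize tends to 0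
    have hctend : Tendsto (fun l => θ ^ (jj l - 1)) atTop (nhds 0) := by
      have hdiv : Tendsto (fun l => α (φ l) i / θ) atTop (nhds 0) := by
        have := hαtend.div_const θ
        simpa using this
      refine Tendsto.congr' ?_ hdiv
      filter_upwards [hjj1] with l hl
      rw [hαj l, eq_comm, eq_div_iff hθne, ← pow_succ, Nat.sub_add_cancel hl]
    -- compactness: extract convergent sub-subsequence of (z, J, β, u)
    set T : ℕ → EuclideanSpace ℝ (Fin n) × (EuclideanSpace ℝ (Fin n) × (ℝ × EuclideanSpace ℝ (Fin n))) :=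
      fun l => (z (φ l) i, (J (φ l) i, (β (φ l), u l))) with hT
    have hcomp : IsCompact ((Metric.closedBall w ρ) ×ˢ ((Metric.closedBall w ρJ) ×ˢ
        ((Set.Icc βlo βhi) ×ˢ (Metric.closedBall (0 : EuclideanSpace ℝ (Fin n)) R)))) :=
      (isCompact_closedBall _ _).prod ((isCompact_closedBall _ _).prod
        (isCompact_Icc.prod (isCompact_closedBall _ _)))
    have hTmem : ∀ l, T l ∈ (Metric.closedBall w ρ) ×ˢ ((Metric.closedBall w ρJ) ×ˢ
        ((Set.Icc βlo βhi) ×ˢ (Metric.closedBall (0 : EuclideanSpace ℝ (Fin n)) R))) := by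
      intro l
      refine ⟨?_, ?_, ?_, ?_⟩
      · rw [Metric.mem_closedBall, dist_eq_norm]
        exact hzbnd (φ l) i hi1 (by omega)
      · rw [Metric.mem_closedBall, dist_eq_norm]
        exact hJb (φ l)
      · exact hβ (φ l)
      · rw [Metric.mem_closedBall, dist_eq_norm, sub_zero]
        exact huR l
    obtain ⟨q, hqmem, σ, hσmono, hσtend⟩ := hcomp.tendsto_subseq hTmem
    obtain ⟨zh, Jh, βh, uh⟩ := q
    have htz : Tendsto (fun l => z (φ (σ l)) i) atTop (nhds zh) := by
      have h := (continuous_fst.tendsto (zh, (Jh, (βh, uh)))).comp hσtend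
      simpa [hT, Function.comp_def] using h
    have htJ : Tendsto (fun l => J (φ (σ l)) i) atTop (nhds Jh) := by
      have h := ((continuous_fst.comp continuous_snd).tendsto
        (zh, (Jh, (βh, uh)))).comp hσtend
      simpa [hT, Function.comp_def] using h
    have htβ : Tendsto (fun l => β (φ (σ l))) atTop (nhds βh) := by
      have h := ((continuous_fst.comp (continuous_snd.comp continuous_snd)).tendsto
        (zh, (Jh, (βh, uh)))).comp hσtend
      simpa [hT, Function.comp_def] using h
    have htu : Tendsto (fun l => u (σ l)) atTop (nhds uh) := by
      have h := ((continuous_snd.comp (continuous_snd.comp continuous_snd)).tendsto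
        (zh, (Jh, (βh, uh)))).comp hσtend
      simpa [hT, Function.comp_def] using h
    have hβhmem : βh ∈ Set.Icc βlo βhi := hqmem.2.2.1
    have hβhpos : 0 < βh := lt_of_lt_of_le hβlo hβhmem.1
    have hβhne2 : βh ≠ 0 := ne_of_gt hβhpos
    have hzJh : ε ≤ ‖zh - Jh‖ := by
      have hnt : Tendsto (fun l => ‖z (φ (σ l)) i - J (φ (σ l)) i‖) atTop
          (nhds ‖zh - Jh‖) := (htz.sub htJ).norm
      exact ge_of_tendsto hnt (Eventually.of_forall fun l => hφ (σ l))
    -- trial points converge to zh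
    have hc2 : Tendsto (fun l => θ ^ (jj (σ l) - 1)) atTop (nhds 0) :=
      hctend.comp hσmono.tendsto_atTop
    set y : ℕ → EuclideanSpace ℝ (Fin n) := fun l =>
      θ ^ (jj (σ l) - 1) • J (φ (σ l)) i + (1 - θ ^ (jj (σ l) - 1)) • z (φ (σ l)) i
      with hy
    have hytend : Tendsto y atTop (nhds zh) := by
      have hone : Tendsto (fun _ : ℕ => (1:ℝ)) atTop (nhds 1) := tendsto_const_nhds
      have h1 : Tendsto y atTop (nhds ((0:ℝ) • Jh + ((1:ℝ) - 0) • zh)) :=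
        (hc2.smul htJ).add ((hone.sub hc2).smul htz)
      simpa using h1
    have huh : uh ∈ B i zh :=
      closed_graph_of_maximal (hB_max i hi) hytend htu
        (Eventually.of_forall fun l => huB (σ l))
    -- pass the failure inequality to the limit
    have hjjσ : ∀ᶠ l in atTop, 1 ≤ jj (σ l) :=
      hσmono.tendsto_atTop.eventually hjj1
    have hineq : ∀ᶠ l in atTop,
        ⟪A i (y l) + u (σ l), z (φ (σ l)) i - J (φ (σ l)) i⟫
          ≤ (δ / β (φ (σ l))) * ‖z (φ (σ l)) i - J (φ (σ l)) i‖ ^ 2 := by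
      filter_upwards [hjjσ] with l hl
      exact le_of_lt (hfailj (σ l) (jj (σ l) - 1) (by omega) (u (σ l))
        (huB (σ l)) (huR (σ l)))
    have hlim1 : Tendsto (fun l => ⟪A i (y l) + u (σ l),
        z (φ (σ l)) i - J (φ (σ l)) i⟫) atTop
        (nhds ⟪A i zh + uh, zh - Jh⟫) :=
      Tendsto.inner ((((hA_cont i hi).tendsto zh).comp hytend).add htu)
        (htz.sub htJ)
    have hlim2 : Tendsto (fun l => (δ / β (φ (σ l)))
        * ‖z (φ (σ l)) i - J (φ (σ l)) i‖ ^ 2) atTop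
        (nhds ((δ / βh) * ‖zh - Jh‖ ^ 2)) :=
      (Tendsto.div tendsto_const_nhds htβ hβhne2).mul
        (((htz.sub htJ).norm).pow 2)
    have hfinal1 : ⟪A i zh + uh, zh - Jh⟫ ≤ (δ / βh) * ‖zh - Jh‖ ^ 2 :=
      le_of_tendsto_of_tendsto hlim1 hlim2 hineq
    -- the resolvent relation in the limit
    have huJtend : Tendsto (fun l => (β (φ (σ l)))⁻¹ • (z (φ (σ l)) i
        - β (φ (σ l)) • A i (z (φ (σ l)) i) - J (φ (σ l)) i)) atTop
        (nhds (βh⁻¹ • (zh - βh • A i zh - Jh))) :=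
      (htβ.inv₀ hβhne2).smul
        ((htz.sub (htβ.smul (((hA_cont i hi).tendsto zh).comp htz))).sub htJ)
    have huJh : βh⁻¹ • (zh - βh • A i zh - Jh) ∈ B i Jh :=
      closed_graph_of_maximal (hB_max i hi) htJ huJtend
        (Eventually.of_forall fun l => hJ (φ (σ l)) i hi)
    have hmono2 : ⟪zh - Jh, uh - βh⁻¹ • (zh - βh • A i zh - Jh)⟫ ≥ 0 :=
      (hB_max i hi).1 _ _ _ _ huh huJh
    -- expand and derive a contradiction
    have huJeq2 : βh⁻¹ • (zh - βh • A i zh - Jh)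
        = βh⁻¹ • (zh - Jh) - A i zh := by
      rw [show zh - βh • A i zh - Jh = (zh - Jh) - βh • A i zh by abel, smul_sub,
        smul_smul, inv_mul_cancel₀ hβhne2, one_smul]
    rw [huJeq2] at hmono2
    have hexp2 : ⟪zh - Jh, uh - (βh⁻¹ • (zh - Jh) - A i zh)⟫
        = ⟪zh - Jh, uh⟫ + ⟪zh - Jh, A i zh⟫ - βh⁻¹ * ‖zh - Jh‖ ^ 2 := by
      rw [show uh - (βh⁻¹ • (zh - Jh) - A i zh) = (uh + A i zh) - βh⁻¹ • (zh - Jh)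
        by abel, inner_sub_right, inner_add_right, inner_smul_right,
        real_inner_self_eq_norm_sq]
    rw [hexp2] at hmono2
    have hexp3 : ⟪A i zh + uh, zh - Jh⟫ = ⟪zh - Jh, uh⟫ + ⟪zh - Jh, A i zh⟫ := by
      rw [real_inner_comm, inner_add_right]
      ring
    rw [hexp3] at hfinal1
    have hQpos : 0 < ‖zh - Jh‖ ^ 2 := by nlinarith
    -- now βh⁻¹ Q ≤ (δ/βh) Q with δ < 1 and Q > 0: contradiction
    have hδ1 := hδ.2
    have h10 : βh⁻¹ * ‖zh - Jh‖ ^ 2 ≤ (δ / βh) * ‖zh - Jh‖ ^ 2 := by linarith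
    have h11 : βh⁻¹ * ‖zh - Jh‖ ^ 2 > (δ / βh) * ‖zh - Jh‖ ^ 2 := by
      have : δ / βh < βh⁻¹ := by
        rw [div_lt_iff₀ hβhpos, inv_mul_cancel₀ hβhne2]
        exact hδ.2
      exact (mul_lt_mul_of_pos_right this hQpos)
    linarith
  -- extract a convergent subsequence of x
  have hxmem : ∀ k, x k ∈ Metric.closedBall w ρ := by
    intro k
    rw [Metric.mem_closedBall, dist_eq_norm]
    exact hxbnd k
  obtain ⟨xt, hxtball, φ, hφmono, hφtend⟩ :=
    (isCompact_closedBall w ρ).tendsto_subseq hxmem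
  have hxtX : xt ∈ X :=
    hXcl.mem_of_tendsto hφtend (Eventually.of_forall fun l => hxX (φ l))
  -- all inner iterates converge to xt along φ
  have hztend : ∀ i : ℕ, 1 ≤ i → i ≤ m + 1 →
      Tendsto (fun l => z (φ l) i) atTop (nhds xt) := by
    intro i
    induction i with
    | zero => omega
    | succ i ih =>
      intro h1 h2
      rcases Nat.eq_or_lt_of_le h1 with he | hlt
      · have h0 : i = 0 := by omega
        subst h0
        refine hφtend.congr fun l => ?_
        exact (hz1 (φ l)).symm
      · have hii : 1 ≤ i := by omega
        have him : i ≤ m := by omega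
        have hzi := ih hii (by omega)
        have hdiff0 : Tendsto (fun l => z (φ l) (i+1) - z (φ l) i) atTop (nhds 0) := by
          rw [tendsto_zero_iff_norm_tendsto_zero]
          exact (hzz i (Finset.mem_Icc.mpr ⟨hii, him⟩)).comp hφmono.tendsto_atTop
        have h3 := hzi.add hdiff0
        rw [add_zero] at h3
        refine h3.congr fun l => ?_
        abel
  have hJtend : ∀ i ∈ Finset.Icc 1 m,
      Tendsto (fun l => J (φ l) i) atTop (nhds xt) := by
    intro i hi
    obtain ⟨hi1, him⟩ := Finset.mem_Icc.mp hi
    have h1 := hztend i hi1 (by omega)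
    have h2 : Tendsto (fun l => J (φ l) i - z (φ l) i) atTop (nhds 0) := by
      rw [tendsto_zero_iff_norm_tendsto_zero]
      have h3 := (hzJ i hi).comp hφmono.tendsto_atTop
      refine h3.congr fun l => ?_
      exact norm_sub_rev _ _
    have h4 := h1.add h2
    rw [add_zero] at h4
    refine h4.congr fun l => ?_
    abel
  -- a further subsequence along which β converges
  obtain ⟨βt, hβtmem, σ, hσmono, hσtend⟩ :=
    isCompact_Icc.tendsto_subseq (fun l => hβ (φ l))
  have hβtpos : 0 < βt := lt_of_lt_of_le hβlo hβtmem.1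
  have hβtne : βt ≠ 0 := ne_of_gt hβtpos
  -- xt solves every inclusion
  have hxtS : ∀ i ∈ Finset.Icc 1 m, -A i xt ∈ B i xt := by
    intro i hi
    obtain ⟨hi1, him⟩ := Finset.mem_Icc.mp hi
    have htzσ : Tendsto (fun l => z (φ (σ l)) i) atTop (nhds xt) :=
      (hztend i hi1 (by omega)).comp hσmono.tendsto_atTop
    have htJσ : Tendsto (fun l => J (φ (σ l)) i) atTop (nhds xt) :=
      (hJtend i hi).comp hσmono.tendsto_atTop
    have hβσ : Tendsto (fun l => β (φ (σ l))) atTop (nhds βt) := hσtend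
    have huJt : Tendsto (fun l => (β (φ (σ l)))⁻¹ • (z (φ (σ l)) i
        - β (φ (σ l)) • A i (z (φ (σ l)) i) - J (φ (σ l)) i)) atTop
        (nhds (βt⁻¹ • (xt - βt • A i xt - xt))) :=
      (hβσ.inv₀ hβtne).smul
        ((htzσ.sub (hβσ.smul (((hA_cont i hi).tendsto xt).comp htzσ))).sub htJσ)
    have heq : βt⁻¹ • (xt - βt • A i xt - xt) = -A i xt := by
      rw [show xt - βt • A i xt - xt = -(βt • A i xt) by abel, smul_neg,
        smul_smul, inv_mul_cancel₀ hβtne, one_smul]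
    rw [heq] at huJt
    exact closed_graph_of_maximal (hB_max i hi) htJσ huJt
      (Eventually.of_forall fun l => hJ (φ (σ l)) i hi)
  have hxtSs : xt ∈ Sstar := by
    rw [hSstar]
    exact Set.mem_iInter₂.mpr hxtS
  have hxtSX : xt ∈ Sstar ∩ X := ⟨hxtSs, hxtX⟩
  refine ⟨xt, hxtSX, ?_, hxtS⟩
  -- full convergence via Fejér monotonicity w.r.t. xt
  have hanti2 : Antitone (fun k => ‖x k - xt‖ ^ 2) :=
    antitone_nat_of_succ_le fun k => edec xt hxtSX k
  have hbdd2 : BddBelow (Set.range fun k => ‖x k - xt‖ ^ 2) :=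
    ⟨0, by rintro r ⟨k, rfl⟩; positivity⟩
  have htendE2 : Tendsto (fun k => ‖x k - xt‖ ^ 2) atTop
      (nhds (⨅ k, ‖x k - xt‖ ^ 2)) := tendsto_atTop_ciInf hanti2 hbdd2
  have hsub : Tendsto (fun l => ‖x (φ l) - xt‖ ^ 2) atTop (nhds 0) := by
    have h1 : Tendsto (fun l => x (φ l) - xt) atTop (nhds (xt - xt)) :=
      hφtend.sub tendsto_const_nhds
    rw [sub_self] at h1
    have h2 := (h1.norm).pow 2
    simpa using h2
  have hsub2 : Tendsto (fun l => ‖x (φ l) - xt‖ ^ 2) atTop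
      (nhds (⨅ k, ‖x k - xt‖ ^ 2)) := htendE2.comp hφmono.tendsto_atTop
  have hinf0 : (⨅ k, ‖x k - xt‖ ^ 2) = 0 := tendsto_nhds_unique hsub2 hsub
  rw [hinf0] at htendE2
  have hnorm : Tendsto (fun k => ‖x k - xt‖) atTop (nhds 0) :=
    hsq0 _ (fun k => norm_nonneg _) htendE2
  have hfin : Tendsto (fun k => x k - xt) atTop (nhds 0) :=
    tendsto_zero_iff_norm_tendsto_zero.mpr hnorm
  have hfin2 := hfin.add (tendsto_const_nhds (x := xt))
  rw [zero_add] at hfin2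
  refine hfin2.congr fun k => ?_
  abel
end
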